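/- arXiv:2201.05325 — 7 statements merged into one kernel-verified Lean document; each statement's English description precedes it below -/
import Mathlib

section
/- Let λ = (λ₁,…,λ_m) and μ = (μ₁,…,μ_l) be partitions of n with μ ⊴ λ in dominance order, μ ≠ λ, and μ₁ = λ₁. Suppose k := min{λ_{i-1} − λ_i : i = 2,…,m} > 0 and suppose j ≥ 2 satisfies μ_{j-1} − μ_j < k. Then j ≥ 3, and there exists an index l with 1 < l < j such that μ_{l-1} > μ_l = μ_{l+1} = ⋯ = μ_{j-1}, and for every s with l ≤ s ≤ j−1 one has μ₁ + ⋯ + μ_s < λ₁ + ⋯ + λ_s. -/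
/-- Lemma on partitions `μ ⊴ λ` with `μ₁ = λ₁` and small gap `μ_{j-1} - μ_j < k`. -/
theorem specht_gap_lemma (n m r k j : ℕ) (lam mu : ℕ → ℕ)
    (hm : 2 ≤ m)
    (hlam_anti : ∀ a b, 1 ≤ a → a ≤ b → lam b ≤ lam a)
    (hlam_sum : ∑ i ∈ Finset.Icc 1 m, lam i = n)
    (hlam_pos : 0 < lam m)
    (hlam_zero : ∀ i, m < i → lam i = 0)
    (hr : 1 ≤ r)
    (hmu_anti : ∀ a b, 1 ≤ a → a ≤ b → mu b ≤ mu a)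
    (hmu_sum : ∑ i ∈ Finset.Icc 1 r, mu i = n)
    (hmu_pos : 0 < mu r)
    (hmu_zero : ∀ i, r < i → mu i = 0)
    (hdom : ∀ s, ∑ i ∈ Finset.Icc 1 s, mu i ≤ ∑ i ∈ Finset.Icc 1 s, lam i)
    (hne : ∃ i, 1 ≤ i ∧ mu i ≠ lam i)
    (hmu1 : mu 1 = lam 1)
    (hk : IsLeast {d | ∃ i, 2 ≤ i ∧ i ≤ m ∧ d = lam (i - 1) - lam i} k)
    (hkpos : 0 < k)
    (hj : 2 ≤ j) (hjr : j ≤ r)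
    (hgap : mu (j - 1) - mu j < k) :
    3 ≤ j ∧ ∃ l, 1 < l ∧ l < j ∧ mu l < mu (l - 1) ∧
      (∀ s, l ≤ s → s ≤ j - 1 → mu s = mu l) ∧
      (∀ s, l ≤ s → s ≤ j - 1 →
        ∑ i ∈ Finset.Icc 1 s, mu i < ∑ i ∈ Finset.Icc 1 s, lam i) := by
  have hk_lb : ∀ i, 2 ≤ i → i ≤ m → k ≤ lam (i - 1) - lam i := fun i h2 him =>
    hk.2 ⟨i, h2, him, rfl⟩
  have hsplit : ∀ (f : ℕ → ℕ) (t : ℕ),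
      ∑ i ∈ Finset.Icc 1 (t + 1), f i = ∑ i ∈ Finset.Icc 1 t, f i + f (t + 1) :=
    fun f t => Finset.sum_Icc_succ_top (by omega) f
  have hlam12 : k ≤ lam 1 - lam 2 := by
    have := hk_lb 2 le_rfl hm
    norm_num at this
    exact this
  -- j ≥ 3
  have hj3 : 3 ≤ j := by
    by_contra h
    have hj2 : j = 2 := by omega
    subst hj2
    have h2 := hdom 2
    rw [show (2:ℕ) = 1 + 1 from rfl, hsplit mu 1, hsplit lam 1] at h2
    rw [Finset.Icc_self, Finset.sum_singleton, Finset.sum_singleton] at h2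
    norm_num at h2
    have hgap' : mu 1 - mu 2 < k := by
      rwa [show (2:ℕ) - 1 = 1 from by norm_num] at hgap
    have hle : lam 2 ≤ lam 1 := hlam_anti 1 2 le_rfl (by omega)
    omega
  -- the key strict-dominance step
  have hstrict : ∀ s, 2 ≤ s → s ≤ j - 1 → mu s = mu (j - 1) →
      ∑ i ∈ Finset.Icc 1 s, mu i < ∑ i ∈ Finset.Icc 1 s, lam i := by
    intro s hs2 hsj hval
    rcases lt_or_eq_of_le (hdom s) with h | heq
    · exact h
    · exfalso
      obtain ⟨t, rfl⟩ : ∃ t, s = t + 1 := ⟨s - 1, by omega⟩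
      have h1 := hdom t
      have h2 := hdom (t + 2)
      rw [show t + 2 = (t + 1) + 1 from rfl, hsplit mu (t + 1), hsplit lam (t + 1)] at h2
      rw [hsplit mu t, hsplit lam t] at heq h2
      rw [show t + 1 + 1 = t + 2 from rfl] at h2
      by_cases hsm : t + 2 ≤ m
      · have hg : k ≤ lam (t + 1) - lam (t + 2) := by
          have := hk_lb (t + 2) (by omega) hsm
          rwa [show t + 2 - 1 = t + 1 from by omega] at this
        have hle1 : mu j ≤ mu (t + 2) := hmu_anti _ _ (by omega) (by omega)
        have hle2 : mu (t + 1) = mu (j - 1) := hval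
        omega
      · have hz : lam (t + 2) = 0 := hlam_zero _ (by omega)
        have hpos : 0 < mu (t + 2) :=
          lt_of_lt_of_le hmu_pos (hmu_anti _ _ (by omega) (by omega))
        omega
  -- mu 1 is strictly bigger than mu (j-1)
  have hmu1ne : mu (j - 1) < mu 1 := by
    have hle : mu (j - 1) ≤ mu 1 := hmu_anti 1 (j - 1) le_rfl (by omega)
    rcases lt_or_eq_of_le hle with h | h
    · exact h
    · exfalso
      have h2a : mu (j - 1) ≤ mu 2 := hmu_anti 2 (j - 1) (by omega) (by omega)
      have h2b : mu 2 ≤ mu 1 := hmu_anti 1 2 le_rfl (by omega)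
      have hd := hdom 2
      rw [show (2:ℕ) = 1 + 1 from rfl, hsplit mu 1, hsplit lam 1,
        Finset.Icc_self, Finset.sum_singleton, Finset.sum_singleton] at hd
      norm_num at hd
      have hle12 : lam 2 ≤ lam 1 := hlam_anti 1 2 le_rfl (by omega)
      omega
  -- define l as the least index ≥ 2 where mu equals mu (j-1)
  have hex : ∃ s, 2 ≤ s ∧ mu s = mu (j - 1) := ⟨j - 1, by omega, rfl⟩
  set l := Nat.find hex with hl_def
  obtain ⟨hl2, hlval⟩ := Nat.find_spec hex
  rw [← hl_def] at hl2 hlval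
  have hl_le : l ≤ j - 1 := Nat.find_le ⟨by omega, rfl⟩
  refine ⟨hj3, l, by omega, by omega, ?_, ?_, ?_⟩
  · -- mu l < mu (l - 1)
    have hle : mu l ≤ mu (l - 1) := hmu_anti (l - 1) l (by omega) (by omega)
    rcases lt_or_eq_of_le hle with h | h
    · exact h
    · exfalso
      rcases Nat.lt_or_ge (l - 1) 2 with hcase | hcase
      · -- l = 2, so mu 1 = mu (j-1), contradiction
        have : l - 1 = 1 := by omega
        rw [this] at h
        omega
      · have hmin := Nat.find_min hex (show l - 1 < l by omega)
        exact hmin ⟨hcase, by rw [← h]; exact hlval⟩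
  · intro s hls hsj
    have h1 : mu (j - 1) ≤ mu s := hmu_anti s (j - 1) (by omega) hsj
    have h2 : mu s ≤ mu l := hmu_anti l s (by omega) hls
    omega
  · intro s hls hsj
    have h1 : mu (j - 1) ≤ mu s := hmu_anti s (j - 1) (by omega) hsj
    have h2 : mu s ≤ mu l := hmu_anti l s (by omega) hls
    exact hstrict s (by omega) hsj (by omega)
end

section
/- Let λ = (λ₁,…,λ_m) be a partition of n with λ₁ ≥ 2. Define λ̂ by λ̂₁ = λ₁ − 1 and λ̂_i = min{λ̂_{i-1}, λ₁+⋯+λ_i − (λ̂₁+⋯+λ̂_{i-1}) − 1} for i ≥ 2. Then λ̂ is a partition of n − 1 (non-increasing, non-negative, summing to n−1). -/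
/-- the sequence `λ̂` defined by `λ̂₁ = λ₁ - 1` and
`λ̂ᵢ = min(λ̂_{i-1}, Σ_{j≤i} λⱼ - Σ_{j<i} λ̂ⱼ - 1)` is a partition of `n - 1`. -/
theorem hat_is_partition (n m : ℕ) (lam hat : ℕ → ℕ)
    (hm : 1 ≤ m)
    (hlam_anti : ∀ a b, 1 ≤ a → a ≤ b → lam b ≤ lam a)
    (hlam_sum : ∑ i ∈ Finset.Icc 1 m, lam i = n)
    (hlam_pos : 0 < lam m)
    (hlam_zero : ∀ i, m < i → lam i = 0)
    (hlam1 : 2 ≤ lam 1)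
    (hhat1 : hat 1 = lam 1 - 1)
    (hhatrec : ∀ i, 2 ≤ i → hat i =
      min (hat (i - 1))
        ((∑ j ∈ Finset.Icc 1 i, lam j) - (∑ j ∈ Finset.Icc 1 (i - 1), hat j) - 1)) :
    (∀ a b, 1 ≤ a → a ≤ b → hat b ≤ hat a) ∧
    (∑ i ∈ Finset.Icc 1 n, hat i = n - 1) := by
  set S : ℕ → ℕ := fun i => ∑ j ∈ Finset.Icc 1 i, lam j with hS
  set H : ℕ → ℕ := fun i => ∑ j ∈ Finset.Icc 1 i, hat j with hHdef
  have hSsucc : ∀ i, S (i+1) = S i + lam (i+1) := fun i =>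
    Finset.sum_Icc_succ_top (by omega) _
  have hHsucc : ∀ i, H (i+1) = H i + hat (i+1) := fun i =>
    Finset.sum_Icc_succ_top (by omega) _
  have hrec : ∀ i, 1 ≤ i → hat (i+1) = min (hat i) (S (i+1) - H i - 1) := by
    intro i hi
    have h := hhatrec (i+1) (by omega)
    simp only [Nat.add_sub_cancel] at h
    exact h
  have hSconst : ∀ i, m ≤ i → S i = n := by
    intro i hi
    induction i with
    | zero => omega
    | succ k ih =>
      rcases Nat.lt_or_ge m (k+1) with h | h
      · rw [hSsucc, ih (by omega), hlam_zero _ h]; omega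
      · have hmk : m = k + 1 := by omega
        subst hmk; exact hlam_sum
  have hmono : ∀ a b, 1 ≤ a → a ≤ b → hat b ≤ hat a := by
    intro a b ha hab
    induction b, hab using Nat.le_induction with
    | base => exact le_refl _
    | succ b hb ih =>
      have h := hrec b (by omega)
      calc hat (b+1) ≤ hat b := by rw [h]; exact min_le_left _ _
        _ ≤ hat a := ih
  refine ⟨hmono, ?_⟩
  have hnm : m ≤ n := by
    calc m = ∑ _i ∈ Finset.Icc 1 m, 1 := by simp
    _ ≤ ∑ i ∈ Finset.Icc 1 m, lam i := by
        apply Finset.sum_le_sum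
        intro i hi
        simp only [Finset.mem_Icc] at hi
        have := hlam_anti i m hi.1 hi.2
        omega
    _ = n := hlam_sum
  have key : ∀ i, 1 ≤ i →
      (H i + 1 ≤ S i) ∧ (i ≤ m → 1 ≤ hat i ∧ i ≤ H i) ∧
      (m ≤ i → min (n-1) i ≤ H i ∧ (n - 1 ≤ H i ∨ 1 ≤ hat i)) := by
    intro i hi
    induction i, hi using Nat.le_induction with
    | base =>
      have h1 : H 1 = hat 1 := by simp [hHdef]
      have h2 : S 1 = lam 1 := by simp [hS]
      refine ⟨by omega, fun _ => by omega, fun hm1 => ?_⟩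
      have hm1' : m = 1 := by omega
      have hn1 : S 1 = n := hSconst 1 (by omega)
      constructor
      · omega
      · right; omega
    | succ i hi ih =>
      obtain ⟨A, B, C⟩ := ih
      have hSs := hSsucc i
      have hHs := hHsucc i
      have hcap : lam (i+1) ≤ S (i+1) - H i - 1 := by omega
      have hhatle : hat (i+1) ≤ S (i+1) - H i - 1 := by
        rw [hrec i hi]; exact min_le_right _ _
      have hhatlehat : hat (i+1) ≤ hat i := by
        rw [hrec i hi]; exact min_le_left _ _
      have A' : H (i+1) + 1 ≤ S (i+1) := by omega
      have B' : i + 1 ≤ m → 1 ≤ hat (i+1) ∧ i+1 ≤ H (i+1) := by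
        intro him
        obtain ⟨hB1, hB2⟩ := B (by omega)
        have hl : 1 ≤ lam (i+1) := by
          have := hlam_anti (i+1) m (by omega) him; omega
        have h1 : 1 ≤ hat (i+1) := by
          rw [hrec i hi]; omega
        exact ⟨h1, by omega⟩
      refine ⟨A', B', ?_⟩
      intro hmi
      rcases Nat.lt_or_ge i m with h | h
      · obtain ⟨h1, h2⟩ := B' (by omega)
        exact ⟨by omega, Or.inr h1⟩
      · obtain ⟨C1, C2⟩ := C h
        have hSi : S i = n := hSconst i h
        have hSi1 : S (i+1) = n := hSconst (i+1) (by omega)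
        rcases Nat.lt_or_ge (H i) (n-1) with hlt | hge
        · have h1 : 1 ≤ hat (i+1) := by
            rcases C2 with hC | hC
            · omega
            · rw [hrec i hi]; omega
          exact ⟨by omega, Or.inr h1⟩
        · have h0 : hat (i+1) = 0 := by omega
          exact ⟨by omega, Or.inl (by omega)⟩
  obtain ⟨A, -, C⟩ := key n (by omega)
  have hSn : S n = n := hSconst n hnm
  obtain ⟨C1, -⟩ := C hnm
  show H n = n - 1
  omega
end

section
/- Let λ be a partition of n with λ₁ ≥ 2 and λ̂ as defined (λ̂₁ = λ₁−1, λ̂_i = min{λ̂_{i-1}, Σ_{j≤i}λ_j − Σ_{j<i}λ̂_j − 1}). Then λ̂ is the maximum, in the dominance order on partitions of n−1, of the set of partitions μ' arising as follows: μ' is obtained from a partition μ of n with μ ⊴ λ and μ₁ > μ₂ by setting μ'₁ = μ₁ − 1 and μ'_i = μ_i for i ≥ 2. -/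
/-- `λ̂` is the maximum, in dominance order on partitions of `n - 1`,
of the partitions `μ'` obtained from partitions `μ ⊴ λ` of `n` with `μ₁ > μ₂`
by decreasing the first part by one. -/
theorem hat_is_maximum (n m : ℕ) (lam hat : ℕ → ℕ)
    (hm : 1 ≤ m)
    (hlam_anti : ∀ a b, 1 ≤ a → a ≤ b → lam b ≤ lam a)
    (hlam_sum : ∑ i ∈ Finset.Icc 1 m, lam i = n)
    (hlam_pos : 0 < lam m)
    (hlam_zero : ∀ i, m < i → lam i = 0)
    (hlam1 : 2 ≤ lam 1)
    (hhat1 : hat 1 = lam 1 - 1)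
    (hhatrec : ∀ i, 2 ≤ i → hat i =
      min (hat (i - 1))
        ((∑ j ∈ Finset.Icc 1 i, lam j) - (∑ j ∈ Finset.Icc 1 (i - 1), hat j) - 1)) :
    hat ∈ {nu : ℕ → ℕ | ∃ mu : ℕ → ℕ,
        (∀ a b, 1 ≤ a → a ≤ b → mu b ≤ mu a) ∧
        (∑ i ∈ Finset.Icc 1 n, mu i = n) ∧ (∀ i, n < i → mu i = 0) ∧
        (∀ s, ∑ i ∈ Finset.Icc 1 s, mu i ≤ ∑ i ∈ Finset.Icc 1 s, lam i) ∧
        mu 2 < mu 1 ∧ nu 1 = mu 1 - 1 ∧ (∀ i, 2 ≤ i → nu i = mu i)} ∧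
    ∀ nu ∈ {nu : ℕ → ℕ | ∃ mu : ℕ → ℕ,
        (∀ a b, 1 ≤ a → a ≤ b → mu b ≤ mu a) ∧
        (∑ i ∈ Finset.Icc 1 n, mu i = n) ∧ (∀ i, n < i → mu i = 0) ∧
        (∀ s, ∑ i ∈ Finset.Icc 1 s, mu i ≤ ∑ i ∈ Finset.Icc 1 s, lam i) ∧
        mu 2 < mu 1 ∧ nu 1 = mu 1 - 1 ∧ (∀ i, 2 ≤ i → nu i = mu i)},
      ∀ s, ∑ i ∈ Finset.Icc 1 s, nu i ≤ ∑ i ∈ Finset.Icc 1 s, hat i := by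
  -- basic sum manipulations
  have hstop : ∀ (f : ℕ → ℕ) (s : ℕ),
      ∑ i ∈ Finset.Icc 1 (s+1), f i = (∑ i ∈ Finset.Icc 1 s, f i) + f (s+1) :=
    fun f s => Finset.sum_Icc_succ_top (by omega) f
  have hsplit : ∀ (f : ℕ → ℕ) (s : ℕ), 1 ≤ s →
      ∑ i ∈ Finset.Icc 1 s, f i = f 1 + ∑ i ∈ Finset.Icc 2 s, f i := by
    intro f s hs
    have h : Finset.Icc 1 s = insert 1 (Finset.Icc 2 s) := by
      ext x; simp only [Finset.mem_Icc, Finset.mem_insert]; omega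
    rw [h, Finset.sum_insert (by simp)]
  have hrec' : ∀ s, 1 ≤ s → hat (s+1) = min (hat s)
      ((∑ j ∈ Finset.Icc 1 (s+1), lam j) - (∑ j ∈ Finset.Icc 1 s, hat j) - 1) := by
    intro s hs
    have h := hhatrec (s+1) (by omega)
    simpa using h
  -- F2 : partial sums of hat stay below S - 1
  have hF2 : ∀ s, 1 ≤ s →
      (∑ i ∈ Finset.Icc 1 s, hat i) + 1 ≤ ∑ i ∈ Finset.Icc 1 s, lam i := by
    intro s hs
    induction s, hs using Nat.le_induction with
    | base => simp only [Finset.Icc_self, Finset.sum_singleton]; omega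
    | succ s hs ih =>
      have h1 := hrec' s hs
      have h2 : hat (s+1) ≤ (∑ j ∈ Finset.Icc 1 (s+1), lam j)
          - (∑ j ∈ Finset.Icc 1 s, hat j) - 1 := by
        rw [h1]; exact min_le_right _ _
      have h3 := hstop lam s
      have h4 := hstop hat s
      omega
  -- hat is antitone
  have hanti1 : ∀ s, 1 ≤ s → hat (s+1) ≤ hat s := by
    intro s hs; rw [hrec' s hs]; exact min_le_left _ _
  have hat_anti : ∀ a b, 1 ≤ a → a ≤ b → hat b ≤ hat a := by
    intro a b ha hab
    induction b, hab using Nat.le_induction with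
    | base => exact le_refl _
    | succ b hb ih => exact le_trans (hanti1 b (le_trans ha hb)) ih
  -- Claim P : if hat j < lam j then hat j = lam 1 - 1
  have hP : ∀ j, 1 ≤ j → hat j < lam j → hat j = lam 1 - 1 := by
    intro j hj
    induction j, hj using Nat.le_induction with
    | base => intro _; exact hhat1
    | succ s hs ih =>
      intro hlt
      have h1 := hrec' s hs
      have hf2 := hF2 s hs
      have h3 := hstop lam s
      have hb : lam (s+1) ≤ (∑ j ∈ Finset.Icc 1 (s+1), lam j)
          - (∑ j ∈ Finset.Icc 1 s, hat j) - 1 := by omega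
      have heq : hat (s+1) = hat s := by
        rcases le_total (hat s) ((∑ j ∈ Finset.Icc 1 (s+1), lam j)
            - (∑ j ∈ Finset.Icc 1 s, hat j) - 1) with h | h
        · rw [h1, min_eq_left h]
        · exfalso; rw [h1, min_eq_right h] at hlt; omega
      have h5 : lam (s+1) ≤ lam s := hlam_anti s (s+1) hs (by omega)
      have h6 := ih (by omega)
      omega
  -- Claim L : if partial sums of hat have slack, hat = lam 1 - 1
  have hL : ∀ k, 1 ≤ k →
      (∑ i ∈ Finset.Icc 1 k, hat i) + 1 < ∑ i ∈ Finset.Icc 1 k, lam i →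
      hat k = lam 1 - 1 := by
    intro k hk
    induction k, hk using Nat.le_induction with
    | base => intro _; exact hhat1
    | succ s hs ih =>
      intro hlt
      have h1 := hrec' s hs
      have hf2 := hF2 s hs
      have h3 := hstop lam s
      have h4 := hstop hat s
      have hb : hat (s+1) < (∑ j ∈ Finset.Icc 1 (s+1), lam j)
          - (∑ j ∈ Finset.Icc 1 s, hat j) - 1 := by omega
      have heq : hat (s+1) = hat s := by
        rcases le_total (hat s) ((∑ j ∈ Finset.Icc 1 (s+1), lam j)
            - (∑ j ∈ Finset.Icc 1 s, hat j) - 1) with h | h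
        · rw [h1, min_eq_left h]
        · exfalso; rw [h1, min_eq_right h] at hb; omega
      by_cases hc : (∑ i ∈ Finset.Icc 1 s, hat i) + 1 < ∑ i ∈ Finset.Icc 1 s, lam i
      · rw [heq]; exact ih hc
      · exact hP (s+1) (by omega) (by omega)
  -- m ≤ n
  have hmn : m ≤ n := by
    have h1 : ∀ i ∈ Finset.Icc 1 m, 1 ≤ lam i := by
      intro i hi
      have h2 := Finset.mem_Icc.mp hi
      have h3 := hlam_anti i m h2.1 h2.2
      omega
    have h0 : ∑ i ∈ Finset.Icc 1 m, (1:ℕ) = m := by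
      rw [Finset.sum_const, Nat.card_Icc, smul_eq_mul]; omega
    calc m = ∑ i ∈ Finset.Icc 1 m, 1 := h0.symm
      _ ≤ ∑ i ∈ Finset.Icc 1 m, lam i := Finset.sum_le_sum h1
      _ = n := hlam_sum
  -- S stabilizes at n
  have hSstab : ∀ k, m ≤ k → ∑ i ∈ Finset.Icc 1 k, lam i = n := by
    intro k hk
    induction k, hk using Nat.le_induction with
    | base => exact hlam_sum
    | succ k hk ih =>
      rw [hstop lam k, hlam_zero (k+1) (by omega), ih]
      omega
  have hn2 : 2 ≤ n := by
    have h1 : lam 1 ≤ ∑ i ∈ Finset.Icc 1 m, lam i :=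
      Finset.single_le_sum (f := lam) (fun i _ => Nat.zero_le _)
        (Finset.mem_Icc.mpr ⟨le_refl 1, hm⟩)
    omega
  -- total of hat is n - 1
  have hHn : (∑ i ∈ Finset.Icc 1 n, hat i) + 1 = n := by
    have hSn : ∑ i ∈ Finset.Icc 1 n, lam i = n := hSstab n hmn
    by_contra hne
    have hf2 := hF2 n (by omega)
    have h1 : (∑ i ∈ Finset.Icc 1 n, hat i) + 1 < n := by omega
    have h2 : hat n = lam 1 - 1 := hL n (by omega) (by omega)
    have h3 : ∀ i ∈ Finset.Icc 1 n, hat i = lam 1 - 1 := by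
      intro i hi
      have hi' := Finset.mem_Icc.mp hi
      have ha := hat_anti 1 i (le_refl 1) hi'.1
      have hb := hat_anti i n hi'.1 hi'.2
      omega
    have h4 : (∑ i ∈ Finset.Icc 1 n, hat i) = n * (lam 1 - 1) := by
      rw [Finset.sum_congr rfl h3, Finset.sum_const, Nat.card_Icc, smul_eq_mul]
      norm_num
    have h5 : n * 1 ≤ n * (lam 1 - 1) := Nat.mul_le_mul_left n (by omega)
    omega
  have hHge : ∀ k, n ≤ k → (∑ i ∈ Finset.Icc 1 k, hat i) + 1 = n := by
    intro k hk
    induction k, hk using Nat.le_induction with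
    | base => exact hHn
    | succ k hk ih =>
      have h1 := hrec' k (by omega)
      have h2 : hat (k+1) ≤ (∑ j ∈ Finset.Icc 1 (k+1), lam j)
          - (∑ j ∈ Finset.Icc 1 k, hat j) - 1 := by
        rw [h1]; exact min_le_right _ _
      have h3 := hstop hat k
      have h4 : ∑ i ∈ Finset.Icc 1 (k+1), lam i = n := hSstab (k+1) (by omega)
      omega
  have hhat0 : ∀ i, n < i → hat i = 0 := by
    intro i hi
    obtain ⟨k, rfl⟩ : ∃ k, i = k + 1 := ⟨i - 1, by omega⟩
    have h1 := hrec' k (by omega)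
    have h2 : hat (k+1) ≤ (∑ j ∈ Finset.Icc 1 (k+1), lam j)
        - (∑ j ∈ Finset.Icc 1 k, hat j) - 1 := by
      rw [h1]; exact min_le_right _ _
    have h3 := hHge k (by omega)
    have h4 : ∑ i ∈ Finset.Icc 1 (k+1), lam i = n := hSstab (k+1) (by omega)
    omega
  constructor
  · -- membership: take mu = hat with one extra box at position 1
    simp only [Set.mem_setOf_eq]
    refine ⟨fun i => hat i + (if i = 1 then 1 else 0), ?_, ?_, ?_, ?_, ?_, ?_, ?_⟩
    · intro a b ha hab
      dsimp only
      by_cases hb1 : b = 1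
      · have ha1 : a = 1 := by omega
        subst hb1; subst ha1; exact le_refl _
      · by_cases ha1 : a = 1
        · subst ha1
          have h1 := hat_anti 1 b (le_refl 1) hab
          simp only [hb1, if_false, if_pos rfl]
          omega
        · have h1 := hat_anti a b ha hab
          simp only [hb1, ha1, if_false]
          omega
    · have hone : ∑ i ∈ Finset.Icc 1 n, (if i = 1 then (1:ℕ) else 0) = 1 := by
        rw [Finset.sum_ite_eq' (Finset.Icc 1 n) 1 (fun _ => (1:ℕ))]
        rw [if_pos (Finset.mem_Icc.mpr ⟨le_refl 1, by omega⟩)]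
      rw [Finset.sum_add_distrib, hone]
      omega
    · intro i hi
      have h1 : hat i = 0 := hhat0 i hi
      have h2 : i ≠ 1 := by omega
      simp only [h1, h2, if_false]
    · intro s
      rcases Nat.eq_zero_or_pos s with rfl | hs
      · simp
      · have hone : ∑ i ∈ Finset.Icc 1 s, (if i = 1 then (1:ℕ) else 0) = 1 := by
          rw [Finset.sum_ite_eq' (Finset.Icc 1 s) 1 (fun _ => (1:ℕ))]
          rw [if_pos (Finset.mem_Icc.mpr ⟨le_refl 1, hs⟩)]
        rw [Finset.sum_add_distrib, hone]
        exact hF2 s hs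
    · have h1 : hat 2 ≤ hat 1 := by simpa using hanti1 1 (le_refl 1)
      show hat 2 + (if (2:ℕ) = 1 then 1 else 0) < hat 1 + (if (1:ℕ) = 1 then 1 else 0)
      norm_num
      omega
    · simp
    · intro i hi
      have h2 : i ≠ 1 := by omega
      simp only [h2, if_false]
      omega
  · -- maximality
    intro nu hnu s
    simp only [Set.mem_setOf_eq] at hnu
    obtain ⟨mu, hmu_anti, hmu_sum, hmu_zero, hmu_dom, hmu21, hnu1, hnu2⟩ := hnu
    have hmu1pos : 1 ≤ mu 1 := by omega
    have hnu1' : nu 1 + 1 = mu 1 := by omega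
    have hsum_nu : ∀ t, 1 ≤ t →
        (∑ i ∈ Finset.Icc 1 t, nu i) + 1 = ∑ i ∈ Finset.Icc 1 t, mu i := by
      intro t ht
      have hc : (∑ i ∈ Finset.Icc 2 t, nu i) = ∑ i ∈ Finset.Icc 2 t, mu i :=
        Finset.sum_congr rfl (fun i hi => hnu2 i (Finset.mem_Icc.mp hi).1)
      have e1 := hsplit nu t ht
      have e2 := hsplit mu t ht
      omega
    have hnu_bound : ∀ t, 1 ≤ t →
        (∑ i ∈ Finset.Icc 1 t, nu i) + 1 ≤ ∑ i ∈ Finset.Icc 1 t, lam i := by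
      intro t ht
      rw [hsum_nu t ht]
      exact hmu_dom t
    have hnu1_le : nu 1 + 1 ≤ lam 1 := by
      have h1 := hnu_bound 1 (le_refl 1)
      simpa using h1
    have hnu_top : ∀ b, 1 ≤ b → nu b ≤ nu 1 := by
      intro b hb
      by_cases hb1 : b = 1
      · subst hb1; exact le_refl _
      · have h2 : 2 ≤ b := by omega
        have h3 : mu b ≤ mu 2 := hmu_anti 2 b (by omega) h2
        have h4 := hnu2 b h2
        omega
    induction s with
    | zero => simp
    | succ s ih =>
      rcases Nat.eq_zero_or_pos s with rfl | hs1
      · have h1 : nu 1 ≤ hat 1 := by omega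
        simpa using h1
      · have e1 := hstop nu s
        have e2 := hstop hat s
        by_contra hcon
        have hb := hnu_bound (s+1) (by omega)
        have hlt : (∑ i ∈ Finset.Icc 1 (s+1), hat i) + 1
            < ∑ i ∈ Finset.Icc 1 (s+1), lam i := by omega
        have he := hL (s+1) (by omega) hlt
        have h3 := hnu_top (s+1) (by omega)
        omega
end

section
/- Let λ ⊢ n, fix σ ∈ S_n, and for i ∈ {1,…,n} define d_λ(i) = Σ_{T ∈ STab(λ)} deg_i(in(f_T)), where STab(λ) is the set of standard tableaux of shape λ with respect to the order σ(1) ≺ ⋯ ≺ σ(n) and in(f_T) = ∏_j x_j^{(row of j in T) − 1}. Then d_λ(σ(i)) ≤ d_λ(σ(i+1)) for all 1 ≤ i < n. -/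
/-- `(i, j)` (row `i`, column `j`, both 1-indexed) is a box of the Young diagram of `lam`. -/
def IsCell (lam : ℕ → ℕ) (p : ℕ × ℕ) : Prop :=
  1 ≤ p.1 ∧ 1 ≤ p.2 ∧ p.2 ≤ lam p.1

/-- `T` is a bijective filling of the Young diagram of `lam` by `{1, …, n}`. -/
def IsFilling (n : ℕ) (lam : ℕ → ℕ) (T : ℕ × ℕ → ℕ) : Prop :=
  (∀ p, IsCell lam p → T p ∈ Finset.Icc 1 n) ∧
  (∀ p q, IsCell lam p → IsCell lam q → T p = T q → p = q) ∧
  (∀ v ∈ Finset.Icc 1 n, ∃ p, IsCell lam p ∧ T p = v)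

/-- Rows of `T` increase left to right in the order `σ(1) ≺ σ(2) ≺ ⋯`. -/
def RowStd (σ : Equiv.Perm ℕ) (lam : ℕ → ℕ) (T : ℕ × ℕ → ℕ) : Prop :=
  ∀ i j, 1 ≤ j → IsCell lam (i, j + 1) → σ.symm (T (i, j)) < σ.symm (T (i, j + 1))

/-- Columns of `T` increase top to bottom in the order `σ(1) ≺ σ(2) ≺ ⋯`. -/
def ColStd (σ : Equiv.Perm ℕ) (lam : ℕ → ℕ) (T : ℕ × ℕ → ℕ) : Prop :=
  ∀ i j, 1 ≤ i → IsCell lam (i + 1, j) → σ.symm (T (i, j)) < σ.symm (T (i + 1, j))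

/-- `T` is a standard tableau of shape `lam` w.r.t. the order `σ(1) ≺ ⋯ ≺ σ(n)`. -/
def IsStd (σ : Equiv.Perm ℕ) (n : ℕ) (lam : ℕ → ℕ) (T : ℕ × ℕ → ℕ) : Prop :=
  IsFilling n lam T ∧ RowStd σ lam T ∧ ColStd σ lam T

/-- `d_λ(v) = Σ_{T ∈ STab(λ)} deg_v(in(f_T))`, where `deg_v(in(f_T))` is
(row of `v` in `T`) − 1; tableaux are normalized to vanish off the diagram. -/
noncomputable def dlam (n : ℕ) (σ : Equiv.Perm ℕ) (lam : ℕ → ℕ) (v : ℕ) : ℕ :=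
  ∑ᶠ T ∈ {T : ℕ × ℕ → ℕ | IsStd σ n lam T ∧ ∀ p, ¬ IsCell lam p → T p = 0},
    (sSup {i | ∃ c, IsCell lam (i, c) ∧ T (i, c) = v} - 1)

/-! ### Auxiliary lemmas -/

lemma aux_symm_swap (σ : Equiv.Perm ℕ) (i j x : ℕ) :
    σ.symm (Equiv.swap (σ i) (σ j) x) = Equiv.swap i j (σ.symm x) := by
  conv_lhs => rw [show x = σ (σ.symm x) from (σ.apply_symm_apply x).symm]
  rw [Equiv.swap_apply_apply]
  simp [Equiv.Perm.mul_apply]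

lemma aux_swap_lt {i u v : ℕ} (huv : u < v) (h : ¬(u = i ∧ v = i + 1)) :
    Equiv.swap i (i + 1) u < Equiv.swap i (i + 1) v := by
  simp only [Equiv.swap_apply_def]
  split_ifs <;> omega

lemma aux_cell_left {lam : ℕ → ℕ} {r j : ℕ} (hj : 1 ≤ j) (h : IsCell lam (r, j + 1)) :
    IsCell lam (r, j) :=
  ⟨h.1, hj, le_trans (Nat.le_succ j) h.2.2⟩

lemma aux_cell_up {lam : ℕ → ℕ} (hanti : ∀ a b, 1 ≤ a → a ≤ b → lam b ≤ lam a)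
    {r j : ℕ} (hr : 1 ≤ r) (h : IsCell lam (r + 1, j)) : IsCell lam (r, j) :=
  ⟨hr, h.2.1, le_trans h.2.2 (hanti r (r + 1) hr (Nat.le_succ r))⟩

/-- The row of the (unique) cell of `T` containing `v`. -/
noncomputable def rowOf (lam : ℕ → ℕ) (T : ℕ × ℕ → ℕ) (v : ℕ) : ℕ :=
  sSup {i | ∃ c, IsCell lam (i, c) ∧ T (i, c) = v}

lemma rowOf_eq {n : ℕ} {lam : ℕ → ℕ} {T : ℕ × ℕ → ℕ} (hT : IsFilling n lam T)
    {p : ℕ × ℕ} {v : ℕ} (hp : IsCell lam p) (hv : T p = v) :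
    rowOf lam T v = p.1 := by
  obtain ⟨r0, c0⟩ := p
  have hset : {i | ∃ c, IsCell lam (i, c) ∧ T (i, c) = v} = {r0} := by
    ext r
    simp only [Set.mem_setOf_eq, Set.mem_singleton_iff]
    constructor
    · rintro ⟨c, hc, hvc⟩
      exact congrArg Prod.fst (hT.2.1 (r, c) (r0, c0) hc hp (hvc.trans hv.symm))
    · rintro rfl
      exact ⟨c0, hp, hv⟩
  rw [rowOf, hset, csSup_singleton]

lemma aux_col_chain {n : ℕ} {σ : Equiv.Perm ℕ} {lam : ℕ → ℕ} {T : ℕ × ℕ → ℕ}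
    (hanti : ∀ a b, 1 ≤ a → a ≤ b → lam b ≤ lam a)
    (hT : IsStd σ n lam T) {c r r' : ℕ} (hr : 1 ≤ r) (hrr : r < r')
    (hcell : IsCell lam (r', c)) : σ.symm (T (r, c)) < σ.symm (T (r', c)) := by
  induction r' with
  | zero => omega
  | succ k ih =>
    rcases Nat.lt_or_ge r k with hk | hk
    · have hck : IsCell lam (k, c) := aux_cell_up hanti (by omega) hcell
      exact lt_trans (ih hk hck) (hT.2.2 k c (by omega) hcell)
    · have hrk : r = k := by omega
      subst hrk
      exact hT.2.2 r c hr hcell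

/-- `a` and `b` occupy the same row or the same column of `T`. -/
def SameLine (lam : ℕ → ℕ) (a b : ℕ) (T : ℕ × ℕ → ℕ) : Prop :=
  ∃ p q, IsCell lam p ∧ IsCell lam q ∧ T p = a ∧ T q = b ∧ (p.1 = q.1 ∨ p.2 = q.2)

/-- `d_λ(σ(i)) ≤ d_λ(σ(i+1))` for all `1 ≤ i < n`. -/
theorem dlam_monotone (n m : ℕ) (lam : ℕ → ℕ) (σ : Equiv.Perm ℕ)
    (hm : 1 ≤ m)
    (hlam_anti : ∀ a b, 1 ≤ a → a ≤ b → lam b ≤ lam a)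
    (hlam_sum : ∑ i ∈ Finset.Icc 1 m, lam i = n)
    (hlam_pos : 0 < lam m)
    (hlam_zero : ∀ i, m < i → lam i = 0)
    (hσ : ∀ v, v ∈ Finset.Icc 1 n ↔ σ v ∈ Finset.Icc 1 n) :
    ∀ i, 1 ≤ i → i < n → dlam n σ lam (σ i) ≤ dlam n σ lam (σ (i + 1)) := by
  intro i hi1 hin
  classical
  set a := σ i with hadef
  set b := σ (i + 1) with hbdef
  have ha : a ∈ Finset.Icc 1 n := (hσ i).mp (Finset.mem_Icc.mpr ⟨hi1, le_of_lt hin⟩)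
  have hb : b ∈ Finset.Icc 1 n := (hσ (i + 1)).mp (Finset.mem_Icc.mpr ⟨by omega, by omega⟩)
  have hab : a ≠ b := fun h => by have := σ.injective h; omega
  have ha0 : (0 : ℕ) ≠ a := by have := Finset.mem_Icc.mp ha; omega
  have hb0 : (0 : ℕ) ≠ b := by have := Finset.mem_Icc.mp hb; omega
  set S := {T : ℕ × ℕ → ℕ | IsStd σ n lam T ∧ ∀ p, ¬ IsCell lam p → T p = 0} with hSdef
  have hbox : ∀ p, IsCell lam p → p ∈ (Finset.Icc 1 m ×ˢ Finset.Icc 1 (lam 1)) := by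
    rintro ⟨r, c⟩ ⟨h1, h2, h3⟩
    simp only [Finset.mem_product, Finset.mem_Icc]
    refine ⟨⟨h1, ?_⟩, h2, le_trans h3 (hlam_anti 1 r le_rfl h1)⟩
    by_contra hmr
    have := hlam_zero r (by omega)
    simp only at h3
    omega
  have hfin : S.Finite := by
    apply Set.Finite.of_finite_image
      (f := fun T => (fun x : ↥(Finset.Icc 1 m ×ˢ Finset.Icc 1 (lam 1)) => T x.1))
    · apply Set.Finite.subset
        (Set.Finite.pi (fun _ : ↥(Finset.Icc 1 m ×ˢ Finset.Icc 1 (lam 1)) => Set.finite_Iic n))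
      rintro f ⟨T, hT, rfl⟩
      intro x _
      simp only [Set.mem_Iic]
      by_cases hc : IsCell lam x.1
      · have := Finset.mem_Icc.mp (hT.1.1.1 x.1 hc); omega
      · rw [hT.2 x.1 hc]; omega
    · intro T hT T' hT' h
      funext p
      by_cases hp : IsCell lam p
      · exact congrFun h ⟨p, hbox p hp⟩
      · rw [hT.2 p hp, hT'.2 p hp]
  set g : (ℕ × ℕ → ℕ) → (ℕ × ℕ → ℕ) := fun T p => Equiv.swap a b (T p) with hgdef
  have hswap_mem : ∀ v ∈ Finset.Icc 1 n, Equiv.swap a b v ∈ Finset.Icc 1 n := by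
    intro v hv
    rcases eq_or_ne v a with rfl | hva
    · rwa [Equiv.swap_apply_left]
    rcases eq_or_ne v b with rfl | hvb
    · rwa [Equiv.swap_apply_right]
    · rwa [Equiv.swap_apply_of_ne_of_ne hva hvb]
  -- swapping a, b preserves standardness when a, b are not on a common line
  have hg_std : ∀ T ∈ S, ¬ SameLine lam a b T → g T ∈ S := by
    intro T hT hns
    obtain ⟨⟨hfill, hrow, hcol⟩, hzero⟩ := hT
    have key : ∀ p q : ℕ × ℕ, IsCell lam p → IsCell lam q → (p.1 = q.1 ∨ p.2 = q.2) →
        σ.symm (T p) < σ.symm (T q) → σ.symm (g T p) < σ.symm (g T q) := by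
      intro p q hp hq hline hlt
      show σ.symm (Equiv.swap a b (T p)) < σ.symm (Equiv.swap a b (T q))
      rw [hadef, hbdef, aux_symm_swap, aux_symm_swap]
      apply aux_swap_lt hlt
      rintro ⟨h1, h2⟩
      exact hns ⟨p, q, hp, hq,
        by rw [hadef, ← h1, σ.apply_symm_apply],
        by rw [hbdef, ← h2, σ.apply_symm_apply], hline⟩
    refine ⟨⟨⟨?_, ?_, ?_⟩, ?_, ?_⟩, ?_⟩
    · intro p hp
      exact hswap_mem _ (hfill.1 p hp)
    · intro p q hp hq h
      exact hfill.2.1 p q hp hq ((Equiv.swap a b).injective h)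
    · intro v hv
      obtain ⟨p, hp, hTp⟩ := hfill.2.2 (Equiv.swap a b v) (hswap_mem v hv)
      refine ⟨p, hp, ?_⟩
      show Equiv.swap a b (T p) = v
      rw [hTp, Equiv.swap_apply_self]
    · intro r j hj hcell
      exact key (r, j) (r, j + 1) (aux_cell_left hj hcell) hcell (Or.inl rfl)
        (hrow r j hj hcell)
    · intro r j hr hcell
      exact key (r, j) (r + 1, j) (aux_cell_up hlam_anti hr hcell) hcell (Or.inr rfl)
        (hcol r j hr hcell)
    · intro p hp
      show Equiv.swap a b (T p) = 0
      rw [hzero p hp]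
      exact Equiv.swap_apply_of_ne_of_ne ha0 hb0
  have hgg : ∀ T, g (g T) = T := by
    intro T
    funext p
    exact Equiv.swap_apply_self a b (T p)
  have hg_line : ∀ T, ¬ SameLine lam a b T → ¬ SameLine lam a b (g T) := by
    rintro T hns ⟨p, q, hp, hq, hpa, hqb, hline⟩
    have hTp : T p = b := by
      have : Equiv.swap a b (T p) = Equiv.swap a b b := by
        rw [Equiv.swap_apply_right]; exact hpa
      exact (Equiv.swap a b).injective this
    have hTq : T q = a := by
      have : Equiv.swap a b (T q) = Equiv.swap a b a := by
        rw [Equiv.swap_apply_left]; exact hqb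
      exact (Equiv.swap a b).injective this
    exact hns ⟨q, p, hq, hp, hTq, hTp, hline.imp Eq.symm Eq.symm⟩
  set φ : (ℕ × ℕ → ℕ) → (ℕ × ℕ → ℕ) := fun T => if SameLine lam a b T then T else g T
    with hφdef
  have hφφ : Function.Involutive φ := by
    intro T
    by_cases h : SameLine lam a b T
    · simp only [hφdef, if_pos h]
    · simp only [hφdef, if_neg h, if_neg (hg_line T h), hgg]
  have hφS : ∀ T ∈ S, φ T ∈ S := by
    intro T hT
    by_cases h : SameLine lam a b T
    · simpa only [hφdef, if_pos h] using hT
    · simpa only [hφdef, if_neg h] using hg_std T hT h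
  have hkey : ∀ T ∈ S, rowOf lam T a ≤ rowOf lam (φ T) b := by
    intro T hT
    by_cases h : SameLine lam a b T
    · have hφT : φ T = T := by simp only [hφdef, if_pos h]
      rw [hφT]
      obtain ⟨p, q, hp, hq, hpa, hqb, hline⟩ := h
      rw [rowOf_eq hT.1.1 hp hpa, rowOf_eq hT.1.1 hq hqb]
      obtain ⟨p1, p2⟩ := p
      obtain ⟨q1, q2⟩ := q
      rcases hline with h1 | h2
      · exact le_of_eq h1
      · simp only at h2 ⊢
        subst h2
        rcases Nat.lt_trichotomy p1 q1 with hlt | heq | hgt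
        · exact le_of_lt hlt
        · subst heq
          exact absurd (hpa.symm.trans hqb) hab
        · exfalso
          have := aux_col_chain hlam_anti hT.1 hq.1 hgt hp
          rw [hpa, hqb, hadef, hbdef, σ.symm_apply_apply, σ.symm_apply_apply] at this
          omega
    · have hφT : φ T = g T := by simp only [hφdef, if_neg h]
      obtain ⟨p, hp, hpa⟩ := hT.1.1.2.2 a ha
      have hgb : g T p = b := by
        show Equiv.swap a b (T p) = b
        rw [hpa, Equiv.swap_apply_left]
      rw [hφT, rowOf_eq hT.1.1 hp hpa, rowOf_eq (hg_std T hT h).1.1 hp hgb]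
  have heq : ∀ v, dlam n σ lam v = ∑ T ∈ hfin.toFinset, (rowOf lam T v - 1) := by
    intro v
    rw [dlam, ← hSdef, finsum_mem_eq_finite_toFinset_sum _ hfin]
    rfl
  rw [heq a, heq b]
  calc ∑ T ∈ hfin.toFinset, (rowOf lam T a - 1)
      ≤ ∑ T ∈ hfin.toFinset, (rowOf lam (φ T) b - 1) := by
        apply Finset.sum_le_sum
        intro T hTs
        exact Nat.sub_le_sub_right (hkey T (hfin.mem_toFinset.mp hTs)) 1
    _ = ∑ T ∈ hfin.toFinset, (rowOf lam T b - 1) := by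
        apply Finset.sum_bijective φ hφφ.bijective
        · intro T
          constructor
          · intro hTs
            exact hfin.mem_toFinset.mpr (hφS T (hfin.mem_toFinset.mp hTs))
          · intro hTs
            have := hφS (φ T) (hfin.mem_toFinset.mp hTs)
            rw [hφφ T] at this
            exact hfin.mem_toFinset.mpr this
        · intro T _
          rfl
end

section
/- With the notation of the previous statement (λ ⊢ n, σ ∈ S_n, d_λ(i) = Σ_{T ∈ STab(λ)} deg_i(in(f_T))), the inequality d_λ(σ(i)) < d_λ(σ(i+1)) holds if and only if there exists a standard tableau T of shape λ (w.r.t. the order σ(1) ≺ ⋯ ≺ σ(n)) in which σ(i) and σ(i+1) lie in the same column. -/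
lemma cell_up {lam : ℕ → ℕ} (hanti : ∀ a b, 1 ≤ a → a ≤ b → lam b ≤ lam a)
    {r r' c : ℕ} (h1 : 1 ≤ r) (hrr : r ≤ r') (h : IsCell lam (r', c)) :
    IsCell lam (r, c) :=
  ⟨h1, h.2.1, le_trans h.2.2 (hanti r r' h1 hrr)⟩

lemma cell_left {lam : ℕ → ℕ} {r c : ℕ} (h1 : 1 ≤ c) (h : IsCell lam (r, c + 1)) :
    IsCell lam (r, c) :=
  ⟨h.1, h1, by have := h.2.2; simp only at this ⊢; omega⟩

lemma col_chain_aux {n : ℕ} {lam : ℕ → ℕ} {σ : Equiv.Perm ℕ} {T : ℕ × ℕ → ℕ}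
    (hanti : ∀ a b, 1 ≤ a → a ≤ b → lam b ≤ lam a) (hT : IsStd σ n lam T) :
    ∀ d r c, IsCell lam (r, c) → IsCell lam (r + d + 1, c) →
      σ.symm (T (r, c)) < σ.symm (T (r + d + 1, c)) := by
  intro d
  induction d with
  | zero => intro r c h1 h2; exact hT.2.2 r c h1.1 h2
  | succ d ih =>
    intro r c h1 h2
    have hmid : IsCell lam (r + d + 1, c) := cell_up hanti (by omega) (by omega) h2
    have step := hT.2.2 (r + d + 1) c (by omega) (by
      have : r + (d + 1) + 1 = (r + d + 1) + 1 := by omega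
      rw [this] at h2; exact h2)
    have heq : r + (d + 1) + 1 = (r + d + 1) + 1 := by omega
    rw [heq]
    exact (ih r c h1 hmid).trans step

lemma col_chain {n : ℕ} {lam : ℕ → ℕ} {σ : Equiv.Perm ℕ} {T : ℕ × ℕ → ℕ}
    (hanti : ∀ a b, 1 ≤ a → a ≤ b → lam b ≤ lam a) (hT : IsStd σ n lam T)
    {r r' c : ℕ} (hrr : r < r') (h1 : IsCell lam (r, c)) (h2 : IsCell lam (r', c)) :
    σ.symm (T (r, c)) < σ.symm (T (r', c)) := by
  obtain ⟨d, rfl⟩ : ∃ d, r' = r + d + 1 := ⟨r' - r - 1, by omega⟩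
  exact col_chain_aux hanti hT d r c h1 h2

lemma rowOf_eq_s7 {n : ℕ} {lam : ℕ → ℕ} {σ : Equiv.Perm ℕ} {T : ℕ × ℕ → ℕ}
    (hT : IsStd σ n lam T) {p : ℕ × ℕ} (hp : IsCell lam p) :
    sSup {i | ∃ c, IsCell lam (i, c) ∧ T (i, c) = T p} = p.1 := by
  obtain ⟨x, y⟩ := p
  have h : {i | ∃ c, IsCell lam (i, c) ∧ T (i, c) = T (x, y)} = {x} := by
    ext r
    simp only [Set.mem_setOf_eq, Set.mem_singleton_iff]
    constructor
    · rintro ⟨c, hc, he⟩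
      have := hT.1.2.1 (r, c) (x, y) hc hp he
      exact congrArg Prod.fst this
    · rintro rfl
      exact ⟨y, hp, rfl⟩
  rw [h, csSup_singleton]

lemma swap_symm_lt {σ : Equiv.Perm ℕ} {i u v : ℕ}
    (h : σ.symm u < σ.symm v) (hne : ¬ (u = σ i ∧ v = σ (i + 1))) :
    σ.symm (Equiv.swap (σ i) (σ (i + 1)) u) < σ.symm (Equiv.swap (σ i) (σ (i + 1)) v) := by
  have key : ∀ w, σ.symm (Equiv.swap (σ i) (σ (i + 1)) w) =
      if σ.symm w = i then i + 1 else if σ.symm w = i + 1 then i else σ.symm w := by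
    intro w
    rcases eq_or_ne w (σ i) with rfl | hwa
    · simp
    rcases eq_or_ne w (σ (i + 1)) with rfl | hwb
    · simp [(by omega : i + 1 ≠ i)]
    · rw [Equiv.swap_apply_of_ne_of_ne hwa hwb]
      have h1 : σ.symm w ≠ i := fun hh => hwa (by rw [← hh, Equiv.apply_symm_apply])
      have h2 : σ.symm w ≠ i + 1 := fun hh => hwb (by rw [← hh, Equiv.apply_symm_apply])
      simp [h1, h2]
  have hne' : ¬ (σ.symm u = i ∧ σ.symm v = i + 1) := by
    rintro ⟨h1, h2⟩
    exact hne ⟨by rw [← h1, Equiv.apply_symm_apply], by rw [← h2, Equiv.apply_symm_apply]⟩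
  rw [key u, key v]
  split_ifs <;> omega

/-- `d_λ(σ(i)) < d_λ(σ(i+1))` iff some standard tableau of shape `λ`
has `σ(i)` and `σ(i+1)` in the same column. -/
theorem dlam_strict_iff (n m : ℕ) (lam : ℕ → ℕ) (σ : Equiv.Perm ℕ)
    (hm : 1 ≤ m)
    (hlam_anti : ∀ a b, 1 ≤ a → a ≤ b → lam b ≤ lam a)
    (hlam_sum : ∑ i ∈ Finset.Icc 1 m, lam i = n)
    (hlam_pos : 0 < lam m)
    (hlam_zero : ∀ i, m < i → lam i = 0)
    (hσ : ∀ v, v ∈ Finset.Icc 1 n ↔ σ v ∈ Finset.Icc 1 n) :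
    ∀ i, 1 ≤ i → i < n →
      (dlam n σ lam (σ i) < dlam n σ lam (σ (i + 1)) ↔
        ∃ T, IsStd σ n lam T ∧ ∃ r r' c, IsCell lam (r, c) ∧ IsCell lam (r', c) ∧
          T (r, c) = σ i ∧ T (r', c) = σ (i + 1)) := by
  classical
  intro i hi1 hin
  have han : σ i ∈ Finset.Icc 1 n := (hσ i).1 (Finset.mem_Icc.2 ⟨hi1, le_of_lt hin⟩)
  have hbn : σ (i + 1) ∈ Finset.Icc 1 n := (hσ (i + 1)).1 (Finset.mem_Icc.2 ⟨by omega, by omega⟩)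
  have ha1 : 1 ≤ σ i := (Finset.mem_Icc.1 han).1
  have hb1 : 1 ≤ σ (i + 1) := (Finset.mem_Icc.1 hbn).1
  have hab : σ i ≠ σ (i + 1) := fun h => by have := σ.injective h; omega
  have hsa : σ.symm (σ i) = i := σ.symm_apply_apply i
  have hsb : σ.symm (σ (i + 1)) = i + 1 := σ.symm_apply_apply (i + 1)
  set S : Set (ℕ × ℕ → ℕ) :=
    {T | IsStd σ n lam T ∧ ∀ p, ¬ IsCell lam p → T p = 0} with hSdef
  -- cells lie in a fixed finite box
  have hcell_box : ∀ p : ℕ × ℕ, IsCell lam p →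
      p ∈ (Finset.Icc 1 m ×ˢ Finset.Icc 1 (lam 1) : Finset (ℕ × ℕ)) := by
    intro p hp
    have hpm : p.1 ≤ m := by
      by_contra h
      have h0 := hlam_zero p.1 (by omega)
      have h2 := hp.2.2; have h3 := hp.2.1; omega
    have h4 : p.2 ≤ lam 1 := le_trans hp.2.2 (hlam_anti 1 p.1 le_rfl hp.1)
    rw [Finset.mem_product, Finset.mem_Icc, Finset.mem_Icc]
    exact ⟨⟨hp.1, hpm⟩, hp.2.1, h4⟩
  have hSfin : S.Finite := by
    set box := (Finset.Icc 1 m ×ˢ Finset.Icc 1 (lam 1) : Finset (ℕ × ℕ)) with hbox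
    set e : ({p : ℕ × ℕ // p ∈ box} → Fin (n + 1)) → (ℕ × ℕ → ℕ) :=
      fun g p => if h : p ∈ box then (g ⟨p, h⟩ : ℕ) else 0 with he
    apply Set.Finite.subset (Set.finite_range e)
    rintro T ⟨hT, hnorm⟩
    refine ⟨fun p => if h : IsCell lam p.val then
      ⟨T p.val, by have := hT.1.1 p.val h; rw [Finset.mem_Icc] at this; omega⟩ else 0, ?_⟩
    funext p
    by_cases hc : IsCell lam p
    · have hpb := hcell_box p hc
      simp [he, hpb, hc]
    · have h0 : T p = 0 := hnorm p hc
      by_cases hpb : p ∈ box <;> simp [he, hpb, hc, h0]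
  set F := hSfin.toFinset with hF
  have hmemF : ∀ T, T ∈ F ↔ (IsStd σ n lam T ∧ ∀ p, ¬ IsCell lam p → T p = 0) :=
    fun T => hSfin.mem_toFinset
  have hdlam : ∀ v, dlam n σ lam v =
      ∑ T ∈ F, (sSup {r | ∃ c, IsCell lam (r, c) ∧ T (r, c) = v} - 1) := by
    intro v
    rw [dlam]
    exact finsum_mem_eq_finite_toFinset_sum _ hSfin
  -- row of a value
  have hrow : ∀ T ∈ F, ∀ v : ℕ, ∀ p : ℕ × ℕ, IsCell lam p → T p = v →
      sSup {r | ∃ c, IsCell lam (r, c) ∧ T (r, c) = v} - 1 = p.1 - 1 := by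
    intro T hT v p hp hpv
    rw [← hpv, rowOf_eq_s7 ((hmemF T).1 hT).1 hp]
  -- same column / same row predicates
  set P : (ℕ × ℕ → ℕ) → Prop := fun T => ∃ p q : ℕ × ℕ,
    IsCell lam p ∧ IsCell lam q ∧ T p = σ i ∧ T q = σ (i + 1) ∧ p.2 = q.2 with hPdef
  set Q : (ℕ × ℕ → ℕ) → Prop := fun T => ∃ p q : ℕ × ℕ,
    IsCell lam p ∧ IsCell lam q ∧ T p = σ i ∧ T q = σ (i + 1) ∧ p.1 = q.1 with hQdef
  set fa : (ℕ × ℕ → ℕ) → ℕ :=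
    fun T => sSup {r | ∃ c, IsCell lam (r, c) ∧ T (r, c) = σ i} - 1 with hfa
  set fb : (ℕ × ℕ → ℕ) → ℕ :=
    fun T => sSup {r | ∃ c, IsCell lam (r, c) ∧ T (r, c) = σ (i + 1)} - 1 with hfb
  -- termwise facts
  have hQeq : ∀ T ∈ F, Q T → fa T = fb T := by
    rintro T hT ⟨p, q, hp, hq, hpa, hqb, hr⟩
    rw [hfa, hfb]
    simp only
    rw [hrow T hT _ p hp hpa, hrow T hT _ q hq hqb, hr]
  have hPlt : ∀ T ∈ F, P T → fa T < fb T := by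
    rintro T hT ⟨⟨p1, p2⟩, ⟨q1, q2⟩, hp, hq, hpa, hqb, hc⟩
    simp only at hc
    subst hc
    have hstd := ((hmemF T).1 hT).1
    have hne : p1 ≠ q1 := by
      intro h
      subst h
      rw [hpa] at hqb
      exact hab hqb
    have hlt : p1 < q1 := by
      rcases lt_or_gt_of_ne hne with h | h
      · exact h
      · exfalso
        have := col_chain hlam_anti hstd h hq hp
        rw [hpa, hqb, hsa, hsb] at this
        omega
    rw [hfa, hfb]
    simp only
    rw [hrow T hT _ _ hp hpa, hrow T hT _ _ hq hqb]
    have : 1 ≤ p1 := hp.1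
    simp only
    omega
  -- the swap
  set s : Equiv.Perm ℕ := Equiv.swap (σ i) (σ (i + 1)) with hs
  have hs0 : s 0 = 0 := Equiv.swap_apply_of_ne_of_ne (by omega) (by omega)
  have hsval_a : ∀ x, s x = σ i ↔ x = σ (i + 1) := by
    intro x
    constructor
    · intro h
      have := congrArg s h
      rw [Equiv.swap_apply_self, Equiv.swap_apply_left] at this
      exact this
    · rintro rfl; exact Equiv.swap_apply_right _ _
  have hsval_b : ∀ x, s x = σ (i + 1) ↔ x = σ i := by
    intro x
    constructor
    · intro h
      have := congrArg s h
      rw [Equiv.swap_apply_self, Equiv.swap_apply_right] at this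
      exact this
    · rintro rfl; exact Equiv.swap_apply_left _ _
  have hsmem : ∀ v ∈ Finset.Icc 1 n, s v ∈ Finset.Icc 1 n := by
    intro v hv
    rcases eq_or_ne v (σ i) with rfl | hva
    · rw [Equiv.swap_apply_left]; exact hbn
    rcases eq_or_ne v (σ (i + 1)) with rfl | hvb
    · rw [Equiv.swap_apply_right]; exact han
    · rw [Equiv.swap_apply_of_ne_of_ne hva hvb]; exact hv
  have hswapF : ∀ T, T ∈ F → ¬ P T → ¬ Q T → (fun p => s (T p)) ∈ F := by
    intro T hTF hP hQ
    obtain ⟨hT, hnorm⟩ := (hmemF T).1 hTF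
    rw [hmemF]
    refine ⟨⟨⟨?_, ?_, ?_⟩, ?_, ?_⟩, ?_⟩
    · intro p hp; exact hsmem _ (hT.1.1 p hp)
    · intro p q hp hq he; exact hT.1.2.1 p q hp hq (s.injective he)
    · intro v hv
      obtain ⟨p, hp, hpe⟩ := hT.1.2.2 (s v) (hsmem v hv)
      refine ⟨p, hp, ?_⟩
      show s (T p) = v
      rw [hpe]; exact Equiv.swap_apply_self _ _ _
    · intro r j hj hcell
      refine swap_symm_lt (hT.2.1 r j hj hcell) ?_
      rintro ⟨h1, h2⟩
      exact hQ ⟨(r, j), (r, j + 1), cell_left hj hcell, hcell, h1, h2, rfl⟩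
    · intro r j hr hcell
      refine swap_symm_lt (hT.2.2 r j hr hcell) ?_
      rintro ⟨h1, h2⟩
      exact hP ⟨(r, j), (r + 1, j), cell_up hlam_anti hr (by omega) hcell, hcell, h1, h2, rfl⟩
    · intro p hp; rw [hnorm p hp]; exact hs0
  have hPswap : ∀ T : ℕ × ℕ → ℕ, P (fun p => s (T p)) ↔ P T := by
    intro T
    constructor
    · rintro ⟨p, q, hp, hq, hpa, hqb, hc⟩
      exact ⟨q, p, hq, hp, (hsval_b _).1 hqb, (hsval_a _).1 hpa, hc.symm⟩
    · rintro ⟨p, q, hp, hq, hpa, hqb, hc⟩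
      refine ⟨q, p, hq, hp, ?_, ?_, hc.symm⟩
      · show s (T q) = σ i
        rw [hqb]; exact Equiv.swap_apply_right _ _
      · show s (T p) = σ (i + 1)
        rw [hpa]; exact Equiv.swap_apply_left _ _
  have hQswap : ∀ T : ℕ × ℕ → ℕ, Q (fun p => s (T p)) ↔ Q T := by
    intro T
    constructor
    · rintro ⟨p, q, hp, hq, hpa, hqb, hc⟩
      exact ⟨q, p, hq, hp, (hsval_b _).1 hqb, (hsval_a _).1 hpa, hc.symm⟩
    · rintro ⟨p, q, hp, hq, hpa, hqb, hc⟩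
      refine ⟨q, p, hq, hp, ?_, ?_, hc.symm⟩
      · show s (T q) = σ i
        rw [hqb]; exact Equiv.swap_apply_right _ _
      · show s (T p) = σ (i + 1)
        rw [hpa]; exact Equiv.swap_apply_left _ _
  have hfswap : ∀ T : ℕ × ℕ → ℕ, fb (fun p => s (T p)) = fa T := by
    intro T
    rw [hfa, hfb]
    simp only
    congr 2
    ext r
    simp only [Set.mem_setOf_eq]
    constructor
    · rintro ⟨c, hc, he⟩; exact ⟨c, hc, (hsval_b _).1 he⟩
    · rintro ⟨c, hc, he⟩
      refine ⟨c, hc, ?_⟩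
      show s (T (r, c)) = σ (i + 1)
      rw [he]; exact Equiv.swap_apply_left _ _
  -- split sums
  set N := (F.filter fun T => ¬ P T).filter fun T => ¬ Q T with hN
  have hsplit : ∀ f : (ℕ × ℕ → ℕ) → ℕ, ∑ T ∈ F, f T =
      ∑ T ∈ F.filter P, f T + ((∑ T ∈ (F.filter fun T => ¬ P T).filter Q, f T) +
        ∑ T ∈ N, f T) := by
    intro f
    rw [hN, Finset.sum_filter_add_sum_filter_not ((F.filter fun T => ¬ P T)) Q f,
      Finset.sum_filter_add_sum_filter_not F P f]
  have hmid : ∑ T ∈ (F.filter fun T => ¬ P T).filter Q, fa T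
      = ∑ T ∈ (F.filter fun T => ¬ P T).filter Q, fb T := by
    refine Finset.sum_congr rfl ?_
    intro T hT
    rw [Finset.mem_filter, Finset.mem_filter] at hT
    exact hQeq T hT.1.1 hT.2
  have hNmem : ∀ T ∈ N, (fun p => s (T p)) ∈ N := by
    intro T hT
    rw [hN, Finset.mem_filter, Finset.mem_filter] at hT ⊢
    obtain ⟨⟨hTF, hP⟩, hQ⟩ := hT
    exact ⟨⟨hswapF T hTF hP hQ, fun h => hP ((hPswap T).1 h)⟩,
      fun h => hQ ((hQswap T).1 h)⟩
  have hNsum : ∑ T ∈ N, fa T = ∑ T ∈ N, fb T := by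
    refine Finset.sum_nbij' (fun T => fun p => s (T p)) (fun T => fun p => s (T p))
      hNmem hNmem ?_ ?_ ?_
    · intro T _; funext p; exact Equiv.swap_apply_self _ _ _
    · intro T _; funext p; exact Equiv.swap_apply_self _ _ _
    · intro T _; exact (hfswap T).symm
  -- the key equivalence
  have key : dlam n σ lam (σ i) < dlam n σ lam (σ (i + 1)) ↔ (F.filter P).Nonempty := by
    have hda : dlam n σ lam (σ i) = ∑ T ∈ F, fa T := hdlam (σ i)
    have hdb : dlam n σ lam (σ (i + 1)) = ∑ T ∈ F, fb T := hdlam (σ (i + 1))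
    rw [hda, hdb, hsplit fa, hsplit fb, hmid, hNsum]
    rcases (F.filter P).eq_empty_or_nonempty with hemp | hne
    · rw [hemp]
      simp
    · constructor
      · intro _; exact hne
      · intro _
        have : ∑ T ∈ F.filter P, fa T < ∑ T ∈ F.filter P, fb T := by
          refine Finset.sum_lt_sum_of_nonempty hne ?_
          intro T hT
          rw [Finset.mem_filter] at hT
          exact hPlt T hT.1 hT.2
        omega
  rw [key]
  constructor
  · rintro ⟨T, hT⟩
    rw [Finset.mem_filter] at hT
    obtain ⟨hTF, ⟨p1, p2⟩, ⟨q1, q2⟩, hp, hq, hpa, hqb, hc⟩ := hT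
    simp only at hc
    subst hc
    exact ⟨T, ((hmemF T).1 hTF).1, p1, q1, p2, hp, hq, hpa, hqb⟩
  · rintro ⟨T, hT, r, r', c, hrc, hrc', hTa, hTb⟩
    set T' : ℕ × ℕ → ℕ := fun p => if IsCell lam p then T p else 0 with hT'
    have hT'cell : ∀ p, IsCell lam p → T' p = T p := by
      intro p hp; rw [hT']; simp [hp]
    refine ⟨T', Finset.mem_filter.2 ⟨(hmemF T').2 ⟨⟨⟨?_, ?_, ?_⟩, ?_, ?_⟩, ?_⟩, ?_⟩⟩
    · intro p hp; rw [hT'cell p hp]; exact hT.1.1 p hp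
    · intro p q hp hq he
      rw [hT'cell p hp, hT'cell q hq] at he
      exact hT.1.2.1 p q hp hq he
    · intro v hv
      obtain ⟨p, hp, hpe⟩ := hT.1.2.2 v hv
      exact ⟨p, hp, by rw [hT'cell p hp]; exact hpe⟩
    · intro r j hj hcell
      rw [hT'cell _ (cell_left hj hcell), hT'cell _ hcell]
      exact hT.2.1 r j hj hcell
    · intro r j hr hcell
      rw [hT'cell _ (cell_up hlam_anti hr (by omega) hcell), hT'cell _ hcell]
      exact hT.2.2 r j hr hcell
    · intro p hp; rw [hT']; simp [hp]
    · exact ⟨(r, c), (r', c), hrc, hrc', by rw [hT'cell _ hrc]; exact hTa,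
        by rw [hT'cell _ hrc']; exact hTb, rfl⟩
end

section
/- Let λ = (λ₁,…,λ_m) ⊢ n with λ₁ > λ₂ > ⋯ > λ_m > 0, m ≥ 2, and set k = min{λ_{i-1} − λ_i : 2 ≤ i ≤ m} and l = λ₁ − λ₂. Assume l > k. Then for every j with n − l < j < n − k and every σ ∈ S_n, there exists a standard tableau T of shape λ (w.r.t. the order σ(1) ≺ ⋯ ≺ σ(n)) in which σ(j−1) and σ(j) lie in the same column. -/
namespace TabAux

def rank (C : Finset (ℕ × ℕ)) (w : ℕ × ℕ → ℕ) (p : ℕ × ℕ) : ℕ :=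
  (C.filter (fun q => w q ≤ w p)).card

lemma rank_pos (C : Finset (ℕ × ℕ)) (w : ℕ × ℕ → ℕ) {p : ℕ × ℕ} (hp : p ∈ C) :
    1 ≤ rank C w p :=
  Finset.card_pos.mpr ⟨p, Finset.mem_filter.mpr ⟨hp, le_rfl⟩⟩

lemma rank_le (C : Finset (ℕ × ℕ)) (w : ℕ × ℕ → ℕ) (p : ℕ × ℕ) :
    rank C w p ≤ C.card :=
  Finset.card_filter_le _ _

lemma rank_lt (C : Finset (ℕ × ℕ)) (w : ℕ × ℕ → ℕ) {p q : ℕ × ℕ}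
    (hq : q ∈ C) (h : w p < w q) : rank C w p < rank C w q := by
  apply Finset.card_lt_card
  constructor
  · intro x hx
    rw [Finset.mem_filter] at hx ⊢
    exact ⟨hx.1, hx.2.trans h.le⟩
  · intro hsub
    have := hsub (Finset.mem_filter.mpr ⟨hq, le_rfl⟩)
    rw [Finset.mem_filter] at this
    omega

lemma rank_inj (C : Finset (ℕ × ℕ)) (w : ℕ × ℕ → ℕ)
    (hw : ∀ p ∈ C, ∀ q ∈ C, w p = w q → p = q)
    {p q : ℕ × ℕ} (hp : p ∈ C) (hq : q ∈ C) (h : rank C w p = rank C w q) : p = q := by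
  rcases lt_trichotomy (w p) (w q) with h' | h' | h'
  · exact absurd h (Nat.ne_of_lt (rank_lt C w hq h'))
  · exact hw p hp q hq h'
  · exact absurd h.symm (Nat.ne_of_lt (rank_lt C w hp h'))

lemma rank_surj (C : Finset (ℕ × ℕ)) (w : ℕ × ℕ → ℕ)
    (hw : ∀ p ∈ C, ∀ q ∈ C, w p = w q → p = q) :
    ∀ v ∈ Finset.Icc 1 C.card, ∃ p ∈ C, rank C w p = v := by
  have himg : C.image (rank C w) = Finset.Icc 1 C.card := by
    apply Finset.eq_of_subset_of_card_le
    · intro v hv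
      rw [Finset.mem_image] at hv
      obtain ⟨p, hp, rfl⟩ := hv
      exact Finset.mem_Icc.mpr ⟨rank_pos C w hp, rank_le C w p⟩
    · rw [Finset.card_image_of_injOn (fun p hp q hq h => rank_inj C w hw hp hq h)]
      simp
  intro v hv
  rw [← himg, Finset.mem_image] at hv
  obtain ⟨p, hp, h⟩ := hv
  exact ⟨p, hp, h⟩

def tabW (lam : ℕ → ℕ) (p k c0 M B : ℕ) (q : ℕ × ℕ) : ℕ :=
  if q.1 = 1 ∧ c0 < q.2 then M + k + 1 + (q.2 - c0)
  else if q.1 = p - 1 ∧ lam p ≤ q.2 then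
    (if q.2 = lam p then M else M + 1 + (q.2 - lam p))
  else if q.1 = p ∧ q.2 = lam p then M + 1
  else q.1 * B + q.2

end TabAux

/-- for a strictly decreasing partition `λ` with
`k = min(λ_{i-1} - λ_i)` and `l = λ₁ - λ₂ > k`, for every `n - l < j < n - k`
there is a standard tableau in which `σ(j-1)` and `σ(j)` lie in the same column. -/
theorem exists_std_tableau_same_column_middle (n m k l : ℕ) (lam : ℕ → ℕ)
    (hm : 2 ≤ m)
    (hlam_anti : ∀ a b, 1 ≤ a → a ≤ b → lam b ≤ lam a)
    (hlam_sum : ∑ i ∈ Finset.Icc 1 m, lam i = n)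
    (hlam_pos : 0 < lam m)
    (hlam_zero : ∀ i, m < i → lam i = 0)
    (hstrict : ∀ i, 2 ≤ i → i ≤ m → lam i < lam (i - 1))
    (hk : IsLeast {d | ∃ i, 2 ≤ i ∧ i ≤ m ∧ d = lam (i - 1) - lam i} k)
    (hl : l = lam 1 - lam 2)
    (hlk : k < l) :
    ∀ j, n - l < j → j < n - k →
      ∀ σ : Equiv.Perm ℕ, (∀ v, v ∈ Finset.Icc 1 n ↔ σ v ∈ Finset.Icc 1 n) →
        ∃ T, IsStd σ n lam T ∧ ∃ r r' c, IsCell lam (r, c) ∧ IsCell lam (r', c) ∧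
          T (r, c) = σ (j - 1) ∧ T (r', c) = σ j := by
  intro j hj1 hj2 σ hσ
  obtain ⟨⟨p, hp2, hpm, hpk⟩, hkmin⟩ := hk
  have hL1 : ∀ i, 1 ≤ i → lam i ≤ lam 1 := fun i hi => hlam_anti 1 i le_rfl hi
  have h21 : lam 2 < lam 1 := by simpa using hstrict 2 le_rfl hm
  have hgap0 : lam p < lam (p - 1) := hstrict p hp2 hpm
  have hgap : lam (p - 1) = lam p + k := by omega
  have hk1 : 1 ≤ k := by omega
  have hp3 : 3 ≤ p := by
    by_contra h
    have hp2' : p = 2 := by omega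
    subst hp2'
    norm_num at hpk
    omega
  have hlam2 : 1 ≤ lam 2 := le_trans hlam_pos (hlam_anti 2 m (by omega) hm)
  have hn2 : lam 1 + lam 2 ≤ n := by
    have hsub : Finset.Icc 1 2 ⊆ Finset.Icc 1 m := Finset.Icc_subset_Icc le_rfl hm
    have h12 : Finset.Icc 1 2 = ({1, 2} : Finset ℕ) := by decide
    have h2 : ∑ i ∈ Finset.Icc 1 2, lam i = lam 1 + lam 2 := by
      rw [h12, Finset.sum_pair (by norm_num)]
    calc lam 1 + lam 2 = ∑ i ∈ Finset.Icc 1 2, lam i := h2.symm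
      _ ≤ ∑ i ∈ Finset.Icc 1 m, lam i := Finset.sum_le_sum_of_subset hsub
      _ = n := hlam_sum
  have hlamp1 : 1 ≤ lam p := le_trans hlam_pos (hlam_anti p m (by omega) hpm)
  have hlampm2 : lam (p - 1) ≤ lam 2 := hlam_anti 2 (p - 1) (by omega) (by omega)
  have hnext : lam (p + 1) < lam p := by
    rcases Nat.lt_or_ge p m with h | h
    · simpa using hstrict (p + 1) (by omega) (by omega)
    · have := hlam_zero (p + 1) (by omega)
      omega
  have hll : lam 1 = lam 2 + l := by omega
  have hjkn : j + k < n := by omega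
  have hjl : n < j + l := by omega
  set t0 := n - j - k with ht0
  have ht01 : 1 ≤ t0 := by omega
  have ht0l : t0 + k < l := by omega
  have hj3 : 3 ≤ j := by omega
  set c0 := lam 1 - t0 with hc0
  have hc0gt : lam 2 + k < c0 := by omega
  have hc0sum : c0 + t0 = lam 1 := by omega
  set B := lam 1 + 1 with hB
  set M := (m + 2) * B with hM
  have hMeq : M = m * B + 2 * B := by rw [hM]; ring
  have hmulmono : ∀ i i' c c' : ℕ, i < i' → c ≤ lam 1 → i * B + c < i' * B + c' := by
    intro i i' c c' hii hc
    have h1 : i * B + B ≤ i' * B := by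
      calc i * B + B = (i + 1) * B := by ring
        _ ≤ i' * B := Nat.mul_le_mul_right B hii
    omega
  have hnormlt : ∀ i c : ℕ, i ≤ m → c ≤ lam 1 → i * B + c < M := by
    intro i c him hc
    have h1 : i * B ≤ m * B := Nat.mul_le_mul_right B him
    omega
  have hnormeq : ∀ i c i' c' : ℕ, c ≤ lam 1 → c' ≤ lam 1 →
      i * B + c = i' * B + c' → i = i' ∧ c = c' := by
    intro i c i' c' h2 h4 h5
    rcases lt_trichotomy i i' with h | h | h
    · exact absurd h5 (Nat.ne_of_lt (hmulmono i i' c c' h h2))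
    · subst h
      omega
    · exact absurd h5.symm (Nat.ne_of_lt (hmulmono i' i c' c h h4))
  have hcell : ∀ i c : ℕ, IsCell lam (i, c) →
      1 ≤ i ∧ i ≤ m ∧ 1 ≤ c ∧ c ≤ lam i ∧ c ≤ lam 1 := by
    intro i c hq
    obtain ⟨h1, h2, h3⟩ := hq
    simp only at h1 h2 h3
    have hqm : i ≤ m := by
      by_contra h
      have := hlam_zero i (by omega)
      omega
    exact ⟨h1, hqm, h2, h3, le_trans h3 (hL1 i h1)⟩
  -- the cells as a finset
  set Cells : Finset (ℕ × ℕ) :=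
    (Finset.Icc 1 m ×ˢ Finset.Icc 1 (lam 1)).filter (fun q => 1 ≤ q.2 ∧ q.2 ≤ lam q.1)
    with hCells
  have hmemC : ∀ q : ℕ × ℕ, q ∈ Cells ↔ IsCell lam q := by
    intro q
    rw [hCells, Finset.mem_filter, Finset.mem_product, Finset.mem_Icc, Finset.mem_Icc]
    constructor
    · rintro ⟨⟨⟨ha, _⟩, _⟩, hb, hc⟩
      exact ⟨ha, hb, hc⟩
    · intro hq
      obtain ⟨i, c⟩ := q
      obtain ⟨h1, h2, h3, h4, h5⟩ := hcell i c hq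
      exact ⟨⟨⟨h1, h2⟩, ⟨h3, h5⟩⟩, h3, h4⟩
  have hcardC : Cells.card = n := by
    rw [← hlam_sum]
    rw [Finset.card_eq_sum_card_fiberwise (f := fun q : ℕ × ℕ => q.1)
      (t := Finset.Icc 1 m) (fun q hq => by
        rw [Finset.mem_coe, hCells, Finset.mem_filter, Finset.mem_product] at hq
        exact Finset.mem_coe.mpr hq.1.1)]
    apply Finset.sum_congr rfl
    intro i hi
    rw [Finset.mem_Icc] at hi
    have hfib : Cells.filter (fun q => q.1 = i) = {i} ×ˢ Finset.Icc 1 (lam i) := by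
      ext q
      rw [Finset.mem_filter, hCells, Finset.mem_filter, Finset.mem_product,
        Finset.mem_product, Finset.mem_singleton, Finset.mem_Icc, Finset.mem_Icc,
        Finset.mem_Icc]
      have hle := hL1 i hi.1
      have hbr : q.1 = i → lam q.1 = lam i := fun h => by rw [h]
      have hi1 := hi.1
      have hi2 := hi.2
      omega
    rw [hfib, Finset.card_product, Finset.card_singleton, Nat.card_Icc]
    omega
  -- the weight function
  set w : ℕ × ℕ → ℕ := TabAux.tabW lam p k c0 M B with hwdef
  have hw_cases : ∀ i c : ℕ, IsCell lam (i, c) →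
      (i = 1 ∧ c0 < c ∧ w (i, c) = M + k + 1 + (c - c0)) ∨
      (i = p - 1 ∧ c = lam p ∧ w (i, c) = M) ∨
      (i = p - 1 ∧ lam p < c ∧ c ≤ lam p + k ∧ w (i, c) = M + 1 + (c - lam p)) ∨
      (i = p ∧ c = lam p ∧ w (i, c) = M + 1) ∨
      (¬(i = 1 ∧ c0 < c) ∧ ¬(i = p - 1 ∧ lam p ≤ c) ∧ ¬(i = p ∧ c = lam p) ∧
        w (i, c) = i * B + c) := by
    intro i c hq
    obtain ⟨hq1, hqm, hq2, hq3, hq4⟩ := hcell i c hq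
    rw [hwdef]
    unfold TabAux.tabW
    split_ifs with h1 h2 h3 h4
    · exact Or.inl ⟨h1.1, h1.2, rfl⟩
    · exact Or.inr (Or.inl ⟨h2.1, h3, rfl⟩)
    · refine Or.inr (Or.inr (Or.inl ⟨h2.1, ?_, ?_, rfl⟩))
      · have h3' : ¬((i, c).2 = lam p) := h3
        have h2' : lam p ≤ (i, c).2 := h2.2
        omega
      · have h21 : i = p - 1 := h2.1
        rw [h21] at hq3
        omega
    · exact Or.inr (Or.inr (Or.inr (Or.inl ⟨h4.1, h4.2, rfl⟩)))
    · exact Or.inr (Or.inr (Or.inr (Or.inr ⟨h1, h2, h4, rfl⟩)))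
  -- explicit values
  have hwval1 : ∀ c, c0 + 1 ≤ c → w (1, c) = M + k + 1 + (c - c0) := by
    intro c hc
    rw [hwdef]
    unfold TabAux.tabW
    split_ifs with h1 <;> omega
  have hwval2 : w (p - 1, lam p) = M := by
    rw [hwdef]
    unfold TabAux.tabW
    split_ifs with h1 h2 h3 <;> omega
  have hwval3 : ∀ t, 1 ≤ t → t ≤ k → w (p - 1, lam p + t) = M + 1 + t := by
    intro t ht1 ht2
    rw [hwdef]
    unfold TabAux.tabW
    split_ifs with h1 h2 h3 <;> omega
  have hwval4 : w (p, lam p) = M + 1 := by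
    rw [hwdef]
    unfold TabAux.tabW
    split_ifs with h1 h2 h3 h4 <;> omega
  -- monotonicity along rows
  have hrow : ∀ i c, 1 ≤ c → IsCell lam (i, c + 1) → w (i, c) < w (i, c + 1) := by
    intro i c hc hcell2
    obtain ⟨ha1, ha2, ha3, ha4, ha5⟩ := hcell i (c + 1) hcell2
    have hcell1 : IsCell lam (i, c) := ⟨ha1, hc, by simp only; omega⟩
    have hv1 : i * B + c < M := hnormlt i c ha2 (by omega)
    have hv2 : i * B + (c + 1) < M := hnormlt i (c + 1) ha2 ha5
    have hbr1 : i = 1 → lam i = lam 1 := fun h => by rw [h]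
    have hbrp : i = p → lam i = lam p := fun h => by rw [h]
    have hbrpm : i = p - 1 → lam i = lam p + k := fun h => by rw [h, hgap]
    rcases hw_cases i c hcell1 with h | h | h | h | h <;>
      rcases hw_cases i (c + 1) hcell2 with h' | h' | h' | h' | h' <;>
        omega
  -- monotonicity along columns
  have hcol : ∀ i c, 1 ≤ i → IsCell lam (i + 1, c) → w (i, c) < w (i + 1, c) := by
    intro i c hi hcell2
    obtain ⟨ha1, ha2, ha3, ha4, ha5⟩ := hcell (i + 1) c hcell2
    have hcell1 : IsCell lam (i, c) := by
      refine ⟨hi, ha3, ?_⟩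
      simp only
      exact le_trans ha4 (hlam_anti i (i + 1) hi (by omega))
    obtain ⟨hb1, hb2, hb3, hb4, hb5⟩ := hcell i c hcell1
    have hv1 : i * B + c < M := hnormlt i c hb2 hb5
    have hv2 : (i + 1) * B + c < M := hnormlt (i + 1) c ha2 ha5
    have hv3 : i * B + c < (i + 1) * B + c := hmulmono i (i + 1) c c (by omega) hb5
    have hbr2 : i = 1 → lam (i + 1) = lam 2 := fun h => by rw [h]
    have hbrp1 : i + 1 = p → lam (i + 1) = lam p := fun h => by rw [h]
    have hbrpp : i = p → lam (i + 1) = lam (p + 1) := fun h => by rw [h]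
    rcases hw_cases i c hcell1 with h | h | h | h | h <;>
      rcases hw_cases (i + 1) c hcell2 with h' | h' | h' | h' | h' <;>
        omega
  -- injectivity of w on cells
  have hwinj : ∀ q ∈ Cells, ∀ q' ∈ Cells, w q = w q' → q = q' := by
    intro q hq q' hq'
    obtain ⟨i, c⟩ := q
    obtain ⟨i', c'⟩ := q'
    rw [hmemC] at hq hq'
    intro heq
    obtain ⟨hb1, hb2, hb3, hb4, hb5⟩ := hcell i c hq
    obtain ⟨hd1, hd2, hd3, hd4, hd5⟩ := hcell i' c' hq'
    have hv1 : i * B + c < M := hnormlt i c hb2 hb5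
    have hv2 : i' * B + c' < M := hnormlt i' c' hd2 hd5
    have hgoal : i = i' ∧ c = c' := by
      rcases hw_cases i c hq with h | h | h | h | h <;>
        rcases hw_cases i' c' hq' with h' | h' | h' | h' | h' <;>
          try omega
      rw [h.2.2.2, h'.2.2.2] at heq
      exact hnormeq i c i' c' hb5 hd5 heq
    simp only [Prod.mk.injEq]
    exact hgoal
  -- the set of "late" cells
  set D : Finset (ℕ × ℕ) :=
    ((Finset.Icc 1 k).image fun t => (p - 1, lam p + t)) ∪ {(p, lam p)} ∪
      ((Finset.Icc (c0 + 1) (lam 1)).image fun c => (1, c)) with hD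
  have hmemD : ∀ q : ℕ × ℕ, q ∈ D ↔
      ((∃ t, 1 ≤ t ∧ t ≤ k ∧ q = (p - 1, lam p + t)) ∨ q = (p, lam p) ∨
        (∃ c, c0 + 1 ≤ c ∧ c ≤ lam 1 ∧ q = (1, c))) := by
    intro q
    rw [hD]
    simp only [Finset.mem_union, Finset.mem_image, Finset.mem_singleton, Finset.mem_Icc]
    constructor
    · rintro ((⟨t, ⟨ht1, ht2⟩, rfl⟩ | h) | ⟨c, ⟨hc1, hc2⟩, rfl⟩)
      · exact Or.inl ⟨t, ht1, ht2, rfl⟩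
      · exact Or.inr (Or.inl h)
      · exact Or.inr (Or.inr ⟨c, hc1, hc2, rfl⟩)
    · rintro (⟨t, ht1, ht2, rfl⟩ | h | ⟨c, hc1, hc2, rfl⟩)
      · exact Or.inl (Or.inl ⟨t, ⟨ht1, ht2⟩, rfl⟩)
      · exact Or.inl (Or.inr h)
      · exact Or.inr ⟨c, ⟨hc1, hc2⟩, rfl⟩
  have hDsub : D ⊆ Cells := by
    intro q hq
    rw [hmemD] at hq
    rw [hmemC]
    rcases hq with ⟨t, ht1, ht2, rfl⟩ | rfl | ⟨c, hc1, hc2, rfl⟩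
    · exact ⟨by simp only; omega, by simp only; omega, by simp only; omega⟩
    · exact ⟨by simp only; omega, by simp only; omega, by simp only; omega⟩
    · exact ⟨by simp only; omega, by simp only; omega, by simp only; omega⟩
  have hDcard : D.card = k + 1 + t0 := by
    have hinj1 : Function.Injective (fun t : ℕ => ((p - 1 : ℕ), lam p + t)) := by
      intro a b hab
      simp only [Prod.mk.injEq] at hab
      omega
    have hinj2 : Function.Injective (fun c : ℕ => ((1 : ℕ), c)) := by
      intro a b hab
      simpa using hab
    have hdisj1 : Disjoint ((Finset.Icc 1 k).image fun t => ((p - 1 : ℕ), lam p + t))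
        ({((p : ℕ), lam p)} : Finset (ℕ × ℕ)) := by
      simp only [Finset.disjoint_singleton_right, Finset.mem_image, Finset.mem_Icc,
        Prod.mk.injEq, not_exists]
      intro t
      omega
    have hdisj2 : Disjoint
        (((Finset.Icc 1 k).image fun t => ((p - 1 : ℕ), lam p + t)) ∪
          ({((p : ℕ), lam p)} : Finset (ℕ × ℕ)))
        ((Finset.Icc (c0 + 1) (lam 1)).image fun c => ((1 : ℕ), c)) := by
      rw [Finset.disjoint_left]
      intro q hq hq'
      simp only [Finset.mem_union, Finset.mem_image, Finset.mem_Icc,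
        Finset.mem_singleton] at hq hq'
      obtain ⟨c, hc, rfl⟩ := hq'
      rcases hq with ⟨t, ht, heq⟩ | heq <;> (rw [Prod.mk.injEq] at heq; omega)
    rw [hD, Finset.card_union_of_disjoint hdisj2, Finset.card_union_of_disjoint hdisj1,
      Finset.card_image_of_injective _ hinj1, Finset.card_image_of_injective _ hinj2,
      Finset.card_singleton, Nat.card_Icc, Nat.card_Icc]
    omega
  -- cells with weight > M are exactly D
  have hDiff : ∀ q ∈ Cells, (M < w q ↔ q ∈ D) := by
    intro q hq
    obtain ⟨i, c⟩ := q
    rw [hmemC] at hq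
    obtain ⟨hb1, hb2, hb3, hb4, hb5⟩ := hcell i c hq
    rw [hmemD]
    have hv1 : i * B + c < M := hnormlt i c hb2 hb5
    rcases hw_cases i c hq with h | h | h | h | h
    · rw [h.2.2]
      constructor
      · intro _
        exact Or.inr (Or.inr ⟨c, by omega, hb5, by rw [h.1]⟩)
      · intro _
        omega
    · rw [h.2.2]
      constructor
      · intro hlt
        exact absurd hlt (lt_irrefl M)
      · rintro (⟨t, ht1, ht2, heq⟩ | heq | ⟨c', hc1, hc2, heq⟩) <;>
          (rw [Prod.mk.injEq] at heq; omega)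
    · rw [h.2.2.2]
      constructor
      · intro _
        refine Or.inl ⟨c - lam p, by omega, by omega, ?_⟩
        rw [Prod.mk.injEq]
        omega
      · intro _
        omega
    · rw [h.2.2]
      constructor
      · intro _
        refine Or.inr (Or.inl ?_)
        rw [Prod.mk.injEq]
        omega
      · intro _
        omega
    · rw [h.2.2.2]
      constructor
      · intro hlt
        exact absurd hlt (by omega)
      · rintro (⟨t, ht1, ht2, heq⟩ | heq | ⟨c', hc1, hc2, heq⟩) <;>
          (rw [Prod.mk.injEq] at heq; omega)
  have hfilterM : Cells.filter (fun q => w q ≤ M) = Cells \ D := by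
    ext q
    rw [Finset.mem_filter, Finset.mem_sdiff]
    constructor
    · rintro ⟨hq, hle⟩
      exact ⟨hq, fun hd => absurd ((hDiff q hq).mpr hd) (by omega)⟩
    · rintro ⟨hq, hnd⟩
      refine ⟨hq, ?_⟩
      by_contra h
      exact hnd ((hDiff q hq).mp (by omega))
  have hcardA : (Cells.filter (fun q => w q ≤ M)).card = j - 1 := by
    rw [hfilterM, Finset.card_sdiff_of_subset hDsub, hcardC, hDcard]
    omega
  have hfilterM1 : Cells.filter (fun q => w q ≤ M + 1) =
      insert (p, lam p) (Cells.filter (fun q => w q ≤ M)) := by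
    ext q
    simp only [Finset.mem_insert, Finset.mem_filter]
    constructor
    · rintro ⟨hq, hle⟩
      rcases Nat.lt_or_ge M (w q) with h | h
      · left
        have hd := (hDiff q hq).mp h
        rw [hmemD] at hd
        rcases hd with ⟨t, ht1, ht2, rfl⟩ | rfl | ⟨c, hc1, hc2, rfl⟩
        · have := hwval3 t ht1 ht2
          omega
        · rfl
        · have := hwval1 c hc1
          omega
      · exact Or.inr ⟨hq, h⟩
    · rintro (rfl | ⟨hq, hle⟩)
      · refine ⟨(hmemC _).mpr ⟨by simp only; omega, by simp only; omega, by simp only; omega⟩, ?_⟩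
        rw [hwval4]
      · exact ⟨hq, by omega⟩
  -- the rank function
  set S := TabAux.rank Cells w with hS
  have hcellpm : IsCell lam (p - 1, lam p) := by
    refine ⟨by simp only; omega, by simp only; omega, by simp only; omega⟩
  have hcellp : IsCell lam (p, lam p) := by
    refine ⟨by simp only; omega, by simp only; omega, by simp only; omega⟩
  have hSval1 : S (p - 1, lam p) = j - 1 := by
    have heq : S (p - 1, lam p) = (Cells.filter (fun q => w q ≤ M)).card := by
      rw [hS]
      unfold TabAux.rank
      simp only [hwval2]
    rw [heq, hcardA]
  have hSval2 : S (p, lam p) = j := by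
    have heq : S (p, lam p) = (Cells.filter (fun q => w q ≤ M + 1)).card := by
      rw [hS]
      unfold TabAux.rank
      simp only [hwval4]
    rw [heq, hfilterM1, Finset.card_insert_of_notMem ?_, hcardA]
    · omega
    · rw [Finset.mem_filter]
      rintro ⟨_, hle⟩
      rw [hwval4] at hle
      omega
  -- assemble the tableau
  refine ⟨fun q => σ (S q), ⟨⟨?_, ?_, ?_⟩, ?_, ?_⟩,
    p - 1, p, lam p, hcellpm, hcellp,
    by show σ (S (p - 1, lam p)) = σ (j - 1); rw [hSval1],
    by show σ (S (p, lam p)) = σ j; rw [hSval2]⟩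
  · intro q hq
    have hqC : q ∈ Cells := (hmemC q).mpr hq
    have h1 := TabAux.rank_pos Cells w hqC
    have h2 := TabAux.rank_le Cells w q
    rw [hcardC] at h2
    rw [← hS] at h1 h2
    exact (hσ (S q)).mp (Finset.mem_Icc.mpr ⟨h1, h2⟩)
  · intro q r hq hr heq
    have hSeq : S q = S r := σ.injective heq
    rw [hS] at hSeq
    exact TabAux.rank_inj Cells w hwinj ((hmemC q).mpr hq) ((hmemC r).mpr hr) hSeq
  · intro v hv
    have hv' : σ.symm v ∈ Finset.Icc 1 n := by
      have h := hσ (σ.symm v)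
      rw [Equiv.apply_symm_apply] at h
      exact h.mpr hv
    obtain ⟨q, hq, hrank⟩ := TabAux.rank_surj Cells w hwinj (σ.symm v)
      (by rw [hcardC]; exact hv')
    refine ⟨q, (hmemC q).mp hq, ?_⟩
    show σ (S q) = v
    rw [hS, hrank, Equiv.apply_symm_apply]
  · intro i c hc hcell2
    simp only [Equiv.symm_apply_apply]
    rw [hS]
    exact TabAux.rank_lt Cells w ((hmemC _).mpr hcell2) (hrow i c hc hcell2)
  · intro i c hc hcell2
    simp only [Equiv.symm_apply_apply]
    rw [hS]
    exact TabAux.rank_lt Cells w ((hmemC _).mpr hcell2) (hcol i c hc hcell2)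
end

section
/- Let λ = (λ₁,…,λ_m) ⊢ n with λ_m > 0 and k = min{λ_{i-1} − λ_i : 2 ≤ i ≤ m} > 0. Let p satisfy k = λ_{p-1} − λ_p. Then for every σ ∈ S_n there exists a standard tableau T of shape λ (w.r.t. the order σ(1) ≺ ⋯ ≺ σ(n)) in which σ(n−k−1) and σ(n−k) lie in the same column; specifically σ(n−k) is at position (p, λ_p), σ(n−k−1) at (p−1, λ_p), and σ(n−k+1),…,σ(n) fill positions (p−1, λ_p+1),…,(p−1, λ_{p-1}). -/
/-- Modified shape: rows `p-1` and `p` truncated to `lam p - 1`. -/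
def lamAux (lam : ℕ → ℕ) (p : ℕ) : ℕ → ℕ :=
  fun i => if i = p - 1 ∨ i = p then lam p - 1 else lam i

/-- Partial row sums of the modified shape. -/
def BAux (lam : ℕ → ℕ) (p : ℕ) (i : ℕ) : ℕ :=
  ∑ t ∈ Finset.Ico 1 i, lamAux lam p t

/-- The rank of cell `(i, j)` in the filling order. -/
def rkAux (lam : ℕ → ℕ) (n k p : ℕ) (i j : ℕ) : ℕ :=
  if i = p ∧ j = lam p then n - k
  else if i = p - 1 ∧ j = lam p then n - k - 1
  else if i = p - 1 ∧ lam p < j then n - k + (j - lam p)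
  else BAux lam p i + j

/-- if `k = min(λ_{i-1} - λ_i) > 0` and `k = λ_{p-1} - λ_p`, then for
every `σ` there is a standard tableau with `σ(n-k)` at `(p, λ_p)`, `σ(n-k-1)` at
`(p-1, λ_p)`, and `σ(n-k+1), …, σ(n)` filling `(p-1, λ_p+1), …, (p-1, λ_{p-1})`. -/
theorem exists_std_tableau_corner (n m k p : ℕ) (lam : ℕ → ℕ)
    (hm : 2 ≤ m)
    (hlam_anti : ∀ a b, 1 ≤ a → a ≤ b → lam b ≤ lam a)
    (hlam_sum : ∑ i ∈ Finset.Icc 1 m, lam i = n)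
    (hlam_pos : 0 < lam m)
    (hlam_zero : ∀ i, m < i → lam i = 0)
    (hk : IsLeast {d | ∃ i, 2 ≤ i ∧ i ≤ m ∧ d = lam (i - 1) - lam i} k)
    (hkpos : 0 < k)
    (hp : 2 ≤ p) (hpm : p ≤ m) (hpk : lam (p - 1) - lam p = k) :
    ∀ σ : Equiv.Perm ℕ, (∀ v, v ∈ Finset.Icc 1 n ↔ σ v ∈ Finset.Icc 1 n) →
      ∃ T, IsStd σ n lam T ∧
        T (p, lam p) = σ (n - k) ∧
        T (p - 1, lam p) = σ (n - k - 1) ∧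
        ∀ c, lam p < c → c ≤ lam (p - 1) →
          ∃ i, n - k + 1 ≤ i ∧ i ≤ n ∧ T (p - 1, c) = σ i := by
  intro σ hσ
  have hlp1 : 1 ≤ lam p := le_trans hlam_pos (hlam_anti p m (by omega) hpm)
  have hple : lam p ≤ lam (p - 1) := hlam_anti (p - 1) p (by omega) (by omega)
  have hlpk : lam (p - 1) = lam p + k := by omega
  have hnext : lam (p + 1) + 1 ≤ lam p := by
    by_cases h : p + 1 ≤ m
    · have hmem : (lam p - lam (p + 1)) ∈
          {d | ∃ i, 2 ≤ i ∧ i ≤ m ∧ d = lam (i - 1) - lam i} := ⟨p + 1, by omega, h, by simp⟩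
      have h1 := hk.2 hmem
      have h2 : lam (p + 1) ≤ lam p := hlam_anti p (p + 1) (by omega) (by omega)
      omega
    · have := hlam_zero (p + 1) (by omega); omega
  have hLp : lamAux lam p p = lam p - 1 := by simp [lamAux]
  have hLp1 : lamAux lam p (p - 1) = lam p - 1 := by simp [lamAux]
  have hLanti : ∀ a b, 1 ≤ a → a ≤ b → lamAux lam p b ≤ lamAux lam p a := by
    intro a b ha hab
    simp only [lamAux]
    split_ifs with h1 h2 h2
    · exact le_rfl
    · have ha2 : a ≤ p - 1 := by omega
      have := hlam_anti a (p - 1) ha ha2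
      omega
    · have hb : p + 1 ≤ b := by omega
      have := hlam_anti (p + 1) b (by omega) hb
      omega
    · exact hlam_anti a b ha hab
  have hBstep : ∀ i, 1 ≤ i → BAux lam p (i + 1) = BAux lam p i + lamAux lam p i := by
    intro i hi
    exact Finset.sum_Ico_succ_top hi _
  have hBmono : ∀ a b, a ≤ b → BAux lam p a ≤ BAux lam p b := by
    intro a b hab
    exact Finset.sum_le_sum_of_subset (Finset.Ico_subset_Ico le_rfl hab)
  have hBtot : BAux lam p (m + 1) + (k + 2) = n := by
    have hps : p ∈ Finset.Icc 1 m := by simp; omega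
    have hp1s : p - 1 ∈ (Finset.Icc 1 m).erase p := by
      rw [Finset.mem_erase]
      constructor
      · omega
      · simp; omega
    have e1 := Finset.sum_erase_add (Finset.Icc 1 m) lam hps
    have e2 := Finset.sum_erase_add ((Finset.Icc 1 m).erase p) lam hp1s
    have e3 := Finset.sum_erase_add (Finset.Icc 1 m) (lamAux lam p) hps
    have e4 := Finset.sum_erase_add ((Finset.Icc 1 m).erase p) (lamAux lam p) hp1s
    have e5 : ∑ x ∈ (((Finset.Icc 1 m).erase p).erase (p - 1)), lamAux lam p x
        = ∑ x ∈ (((Finset.Icc 1 m).erase p).erase (p - 1)), lam x := by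
      apply Finset.sum_congr rfl
      intro x hx
      rw [Finset.mem_erase, Finset.mem_erase] at hx
      simp [lamAux, hx.1, hx.2.1]
    have e6 : BAux lam p (m + 1) = ∑ x ∈ Finset.Icc 1 m, lamAux lam p x := by
      unfold BAux
      rw [Finset.Ico_add_one_right_eq_Icc]
    rw [hLp, hLp1] at *
    omega
  have hnk : k + 2 ≤ n := by omega
  -- classification of ranks of cells
  have hclass : ∀ i j, IsCell lam (i, j) →
      (i = p ∧ j = lam p ∧ rkAux lam n k p i j = n - k) ∨
      (i = p - 1 ∧ j = lam p ∧ rkAux lam n k p i j = n - k - 1) ∨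
      (i = p - 1 ∧ lam p < j ∧ j ≤ lam p + k ∧ rkAux lam n k p i j = n - k + (j - lam p)) ∨
      (rkAux lam n k p i j = BAux lam p i + j ∧ BAux lam p i + j + (k + 2) ≤ n ∧
        1 ≤ j ∧ j ≤ lamAux lam p i ∧ 1 ≤ i ∧ i ≤ m ∧
        ¬(i = p ∧ j = lam p) ∧ ¬(i = p - 1 ∧ j = lam p) ∧ ¬(i = p - 1 ∧ lam p < j)) := by
    intro i j hc
    have hi : 1 ≤ i := hc.1
    have hj : 1 ≤ j := hc.2.1
    have hjl : j ≤ lam i := hc.2.2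
    unfold rkAux
    split_ifs with h1 h2 h3
    · exact Or.inl ⟨h1.1, h1.2, rfl⟩
    · exact Or.inr (Or.inl ⟨h2.1, h2.2, rfl⟩)
    · refine Or.inr (Or.inr (Or.inl ⟨h3.1, h3.2, ?_, rfl⟩))
      have hjj := hjl
      rw [h3.1] at hjj
      omega
    · have him : i ≤ m := by
        by_contra h
        have := hlam_zero i (by omega)
        omega
      have hjL : j ≤ lamAux lam p i := by
        simp only [lamAux]
        split_ifs with h4
        · rcases h4 with rfl | rfl <;> omega
        · omega
      have hhi : BAux lam p i + lamAux lam p i = BAux lam p (i + 1) := (hBstep i hi).symm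
      have hmm : BAux lam p (i + 1) ≤ BAux lam p (m + 1) := hBmono _ _ (by omega)
      exact Or.inr (Or.inr (Or.inr ⟨rfl, by omega, hj, hjL, hi, him, h1, h2, h3⟩))
  -- range
  have hrange : ∀ i j, IsCell lam (i, j) →
      1 ≤ rkAux lam n k p i j ∧ rkAux lam n k p i j ≤ n := by
    intro i j hc
    rcases hclass i j hc with ⟨e1, e2, e3⟩ | ⟨e1, e2, e3⟩ | ⟨e1, e2, e3, e4⟩ |
      ⟨e3, e4, e5, e6, e7, e8, e9, e10, e11⟩ <;> omega
  -- injectivity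
  have hinj : ∀ i j i' j', IsCell lam (i, j) → IsCell lam (i', j') →
      rkAux lam n k p i j = rkAux lam n k p i' j' → i = i' ∧ j = j' := by
    intro i j i' j' hc hc' heq
    rcases hclass i j hc with ⟨e1, e2, e3⟩ | ⟨e1, e2, e3⟩ | ⟨e1, e2, e3, e4⟩ |
        ⟨e3, e4, e5, e6, e7, e8, e9, e10, e11⟩ <;>
      rcases hclass i' j' hc' with ⟨f1, f2, f3⟩ | ⟨f1, f2, f3⟩ | ⟨f1, f2, f3, f4⟩ |
        ⟨f3, f4, f5, f6, f7, f8, f9, f10, f11⟩ <;>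
      try omega
    rcases lt_trichotomy i i' with h | h | h
    · exfalso
      have hs := hBstep i e7
      have hm2 := hBmono (i + 1) i' (by omega)
      omega
    · subst h
      omega
    · exfalso
      have hs := hBstep i' f7
      have hm2 := hBmono (i' + 1) i (by omega)
      omega
  -- row monotonicity
  have hrow : ∀ i j, 1 ≤ j → IsCell lam (i, j + 1) →
      rkAux lam n k p i j < rkAux lam n k p i (j + 1) := by
    intro i j hj hcell
    have hi : 1 ≤ i := hcell.1
    have hjl' : j + 1 ≤ lam i := hcell.2.2
    have hcell0 : IsCell lam (i, j) := ⟨hi, hj, (by omega : j ≤ lam i)⟩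
    rcases hclass i j hcell0 with ⟨rfl, rfl, e3⟩ | ⟨e1, e2, e3⟩ | ⟨e1, e2, e3, e4⟩ |
        ⟨e3, e4, e5, e6, e7, e8, e9, e10, e11⟩
    · omega
    · rcases hclass i (j + 1) hcell with ⟨f1, f2, f3⟩ | ⟨f1, f2, f3⟩ | ⟨f1, f2, f3, f4⟩ |
        ⟨f3, f4, f5, f6, f7, f8, f9, f10, f11⟩ <;> omega
    · rcases hclass i (j + 1) hcell with ⟨f1, f2, f3⟩ | ⟨f1, f2, f3⟩ | ⟨f1, f2, f3, f4⟩ |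
        ⟨f3, f4, f5, f6, f7, f8, f9, f10, f11⟩ <;> omega
    · rcases hclass i (j + 1) hcell with ⟨f1, f2, f3⟩ | ⟨f1, f2, f3⟩ | ⟨f1, f2, f3, f4⟩ |
        ⟨f3, f4, f5, f6, f7, f8, f9, f10, f11⟩ <;> omega
  -- column monotonicity
  have hcol : ∀ i j, 1 ≤ i → IsCell lam (i + 1, j) →
      rkAux lam n k p i j < rkAux lam n k p (i + 1) j := by
    intro i j hi hcell
    have hj : 1 ≤ j := hcell.2.1
    have hjl' : j ≤ lam (i + 1) := hcell.2.2
    have hjl : j ≤ lam i := le_trans hjl' (hlam_anti i (i + 1) hi (by omega))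
    have hcell0 : IsCell lam (i, j) := ⟨hi, hj, hjl⟩
    have hA : lamAux lam p (i + 1) ≤ lamAux lam p i := hLanti i (i + 1) hi (by omega)
    have hs := hBstep i hi
    rcases hclass i j hcell0 with ⟨rfl, rfl, e3⟩ | ⟨e1, e2, e3⟩ | ⟨e1, e2, e3, e4⟩ |
        ⟨e3, e4, e5, e6, e7, e8, e9, e10, e11⟩
    · omega
    · rcases hclass (i + 1) j hcell with ⟨f1, f2, f3⟩ | ⟨f1, f2, f3⟩ | ⟨f1, f2, f3, f4⟩ |
        ⟨f3, f4, f5, f6, f7, f8, f9, f10, f11⟩ <;> omega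
    · have e : i + 1 = p := by omega
      rw [e] at hjl'
      omega
    · rcases hclass (i + 1) j hcell with ⟨f1, f2, f3⟩ | ⟨f1, f2, f3⟩ | ⟨f1, f2, f3, f4⟩ |
        ⟨f3, f4, f5, f6, f7, f8, f9, f10, f11⟩ <;> omega
  -- σ maps Icc to itself bijectively
  have hσsymm : ∀ v, v ∈ Finset.Icc 1 n → σ.symm v ∈ Finset.Icc 1 n := by
    have himg : (Finset.Icc 1 n).image σ = Finset.Icc 1 n := by
      apply Finset.eq_of_subset_of_card_le
      · intro v hv
        simp only [Finset.mem_image] at hv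
        obtain ⟨w, hw, rfl⟩ := hv
        exact (hσ w).mp hw
      · rw [Finset.card_image_of_injective _ σ.injective]
    intro v hv
    rw [← himg] at hv
    obtain ⟨w, hw, hwv⟩ := Finset.mem_image.mp hv
    rw [← hwv, Equiv.symm_apply_apply]
    exact hw
  -- the cell finset
  set cells : Finset (ℕ × ℕ) :=
    (Finset.Icc 1 m).biUnion (fun i => {i} ×ˢ Finset.Icc 1 (lam i)) with hcellsdef
  have hcells_mem : ∀ q : ℕ × ℕ, q ∈ cells ↔ IsCell lam q := by
    rintro ⟨i, j⟩
    simp only [hcellsdef, Finset.mem_biUnion, Finset.mem_Icc, Finset.mem_product,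
      Finset.mem_singleton]
    constructor
    · rintro ⟨a, ⟨ha1, ha2⟩, rfl, hj1, hj2⟩
      exact ⟨ha1, hj1, hj2⟩
    · rintro ⟨hi, hj, hjl⟩
      have him : i ≤ m := by
        by_contra h
        have := hlam_zero i (by omega)
        simp only at hjl hj
        omega
      exact ⟨i, ⟨hi, him⟩, rfl, hj, hjl⟩
  have hcells_card : cells.card = n := by
    rw [hcellsdef, Finset.card_biUnion]
    · rw [← hlam_sum]
      apply Finset.sum_congr rfl
      intro i _
      rw [Finset.card_product, Finset.card_singleton, Nat.card_Icc]
      omega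
    · intro x hx y hy hxy
      rw [Function.onFun, Finset.disjoint_left]
      rintro ⟨a, b⟩ hab hab2
      simp only [Finset.mem_product, Finset.mem_singleton] at hab hab2
      exact hxy (hab.1 ▸ hab2.1 ▸ rfl)
  have himg : cells.image (fun q : ℕ × ℕ => rkAux lam n k p q.1 q.2) = Finset.Icc 1 n := by
    apply Finset.eq_of_subset_of_card_le
    · intro v hv
      simp only [Finset.mem_image] at hv
      obtain ⟨q, hq, rfl⟩ := hv
      have hc := (hcells_mem q).mp hq
      have := hrange q.1 q.2 hc
      simp only [Finset.mem_Icc]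
      omega
    · have hio : Set.InjOn (fun q : ℕ × ℕ => rkAux lam n k p q.1 q.2) cells := by
        intro q hq r hr heq
        have hc := (hcells_mem q).mp (Finset.mem_coe.mp hq)
        have hc' := (hcells_mem r).mp (Finset.mem_coe.mp hr)
        have h := hinj q.1 q.2 r.1 r.2 hc hc' heq
        exact Prod.ext h.1 h.2
      rw [Finset.card_image_of_injOn hio, hcells_card, Nat.card_Icc]
      omega
  refine ⟨fun q => σ (rkAux lam n k p q.1 q.2), ⟨⟨?_, ?_, ?_⟩, ?_, ?_⟩, ?_, ?_, ?_⟩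
  · intro q hq
    have := hrange q.1 q.2 hq
    exact (hσ _).mp (by simp only [Finset.mem_Icc]; omega)
  · intro q r hq hr heq
    have h := hinj q.1 q.2 r.1 r.2 hq hr (σ.injective heq)
    exact Prod.ext h.1 h.2
  · intro v hv
    have hs := hσsymm v hv
    rw [← himg] at hs
    obtain ⟨q, hq, hqv⟩ := Finset.mem_image.mp hs
    refine ⟨q, (hcells_mem q).mp hq, ?_⟩
    show σ (rkAux lam n k p q.1 q.2) = v
    rw [hqv, Equiv.apply_symm_apply]
  · intro i j hj hcell
    show σ.symm (σ (rkAux lam n k p i j)) < σ.symm (σ (rkAux lam n k p i (j + 1)))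
    rw [Equiv.symm_apply_apply, Equiv.symm_apply_apply]
    exact hrow i j hj hcell
  · intro i j hi hcell
    show σ.symm (σ (rkAux lam n k p i j)) < σ.symm (σ (rkAux lam n k p (i + 1) j))
    rw [Equiv.symm_apply_apply, Equiv.symm_apply_apply]
    exact hcol i j hi hcell
  · show σ (rkAux lam n k p p (lam p)) = σ (n - k)
    congr 1
    unfold rkAux
    rw [if_pos ⟨rfl, rfl⟩]
  · show σ (rkAux lam n k p (p - 1) (lam p)) = σ (n - k - 1)
    congr 1
    unfold rkAux
    rw [if_neg (by omega), if_pos ⟨rfl, rfl⟩]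
  · intro c hc1 hc2
    refine ⟨n - k + (c - lam p), by omega, by omega, ?_⟩
    show σ (rkAux lam n k p (p - 1) c) = σ (n - k + (c - lam p))
    congr 1
    unfold rkAux
    rw [if_neg (by omega), if_neg (by omega), if_pos ⟨rfl, hc1⟩]
end
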